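/- arXiv:2509.08692 — 6 statements merged into one kernel-verified Lean document; each statement's English description precedes it below -/
import Mathlib

section
/- For every integer k ≥ 2, the minimum number of vertices in a k-graph with the weak Erdős–Szekeres property equals (k−1)²+1, and the same holds for the strong Erdős–Szekeres property: there is a k-graph on (k−1)²+1 vertices with the strong Erdős–Szekeres property, while no k-graph on at most (k−1)² vertices has even the weak Erdős–Szekeres property. That is, n_wES(k) = n_sES(k) = (k−1)²+1. -/
open Function Finset

/-- Erdős–Szekeres (copied from mathlib Archive). -/
theorem aux_erdos_szekeres {α : Type*} [LinearOrder α] {r s n : ℕ} {f : Fin n → α}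
    (hn : r * s < n) (hf : Injective f) :
    (∃ t : Finset (Fin n), r < #t ∧ StrictMonoOn f ↑t) ∨
      ∃ t : Finset (Fin n), s < #t ∧ StrictAntiOn f ↑t := by
  let inc_sequences_ending_in : Fin n → Finset (Finset (Fin n)) := fun i =>
    univ.powerset.filter fun t => Finset.max t = i ∧ StrictMonoOn f ↑t
  let dec_sequences_ending_in : Fin n → Finset (Finset (Fin n)) := fun i =>
    univ.powerset.filter fun t => Finset.max t = i ∧ StrictAntiOn f ↑t
  have inc_i : ∀ i, {i} ∈ inc_sequences_ending_in i := fun i => by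
    simp [inc_sequences_ending_in, StrictMonoOn]
  have dec_i : ∀ i, {i} ∈ dec_sequences_ending_in i := fun i => by
    simp [dec_sequences_ending_in, StrictAntiOn]
  let ab' : Fin n → ℕ × ℕ := by
    intro i
    apply
      (max' ((inc_sequences_ending_in i).image card) (Nonempty.image ⟨{i}, inc_i i⟩ _),
        max' ((dec_sequences_ending_in i).image card) (Nonempty.image ⟨{i}, dec_i i⟩ _))
  generalize hab : ab' = ab
  rsuffices ⟨i, hi⟩ : ∃ i, r < (ab i).1 ∨ s < (ab i).2
  · refine Or.imp ?_ ?_ hi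
    on_goal 1 =>
      have : (ab i).1 ∈ image card (inc_sequences_ending_in i) := by
        simp only [← hab]; exact max'_mem _ (Nonempty.image ⟨{i}, inc_i i⟩ _)
    on_goal 2 =>
      have : (ab i).2 ∈ image card (dec_sequences_ending_in i) := by
        simp only [← hab]; exact max'_mem _ (Nonempty.image ⟨{i}, dec_i i⟩ _)
    all_goals
      intro hi
      rw [mem_image] at this
      obtain ⟨t, ht₁, ht₂⟩ := this
      refine ⟨t, by rwa [ht₂], ?_⟩
      rw [mem_filter] at ht₁
      apply ht₁.2.2
  have : Injective ab := by
    simp only [← hab]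
    apply Injective.of_lt_imp_ne
    intro i j k q
    injection q with q₁ q₂
    cases lt_or_gt_of_ne fun _ => ne_of_lt ‹i < j› (hf ‹f i = f j›)
    on_goal 1 =>
      apply ne_of_lt _ q₁
      have : (ab' i).1 ∈ image card (inc_sequences_ending_in i) := by exact max'_mem _ (Nonempty.image ⟨{i}, inc_i i⟩ _)
    on_goal 2 =>
      apply ne_of_lt _ q₂
      have : (ab' i).2 ∈ image card (dec_sequences_ending_in i) := by exact max'_mem _ (Nonempty.image ⟨{i}, dec_i i⟩ _)
    all_goals
      rw [Nat.lt_iff_add_one_le]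
      apply le_max'
      rw [mem_image] at this ⊢
      rcases this with ⟨t, ht₁, ht₂⟩
      rw [mem_filter] at ht₁
      have : t.max = i := by simp only [ht₁.2.1]
      refine ⟨insert j t, ?_, ?_⟩
      · rw [mem_filter]
        refine ⟨?_, ?_, ?_⟩
        · rw [mem_powerset]; apply subset_univ
        · convert max_insert (a := j) (s := t)
          rw [ht₁.2.1, max_eq_left]
          apply WithBot.coe_le_coe.mpr (le_of_lt ‹i < j›)
        simp only [StrictMonoOn, StrictAntiOn, coe_insert, Set.mem_insert_iff, mem_coe]
        rintro x ⟨rfl | _⟩ y ⟨rfl | _⟩ _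
        · apply (irrefl _ ‹j < j›).elim
        · exfalso
          apply not_le_of_gt (_root_.trans ‹i < j› ‹j < y›) (le_max_of_eq ‹y ∈ t› ‹t.max = i›)
        · first
          | apply lt_of_le_of_lt _ ‹f i < f j›
          | apply lt_of_lt_of_le ‹f j < f i› _
          rcases lt_or_eq_of_le (le_max_of_eq ‹x ∈ t› ‹t.max = i›) with (_ | rfl)
          · apply le_of_lt (ht₁.2.2 ‹x ∈ t› (mem_of_max ‹t.max = i›) ‹x < i›)
          · rfl
        · apply ht₁.2.2 ‹x ∈ t› ‹y ∈ t› ‹x < y›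
      · rw [card_insert_of_notMem, ht₂]
        intro
        apply not_le_of_gt ‹i < j› (le_max_of_eq ‹j ∈ t› ‹t.max = i›)
  by_contra! q
  let ran : Finset (ℕ × ℕ) := (range r).image Nat.succ ×ˢ (range s).image Nat.succ
  have : image ab univ ⊆ ran := by
    rintro ⟨x₁, x₂⟩
    simp only [ran, mem_image, exists_prop, mem_range, mem_univ, mem_product, true_and,
      Prod.ext_iff]
    rintro ⟨i, rfl, rfl⟩
    specialize q i
    have z : 1 ≤ (ab i).1 ∧ 1 ≤ (ab i).2 := by
      simp only [← hab]
      constructor <;>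
        · apply le_max'
          rw [mem_image]
          exact ⟨{i}, by solve_by_elim, card_singleton i⟩
    exact ⟨⟨(ab i).1 - 1, by omega⟩, (ab i).2 - 1, by omega⟩
  apply not_le_of_gt hn
  simpa [ran, Nat.succ_injective, card_image_of_injective, ‹Injective ab›] using card_le_card this

/-- For every integer `k ≥ 2`, the minimum number of vertices in a
`k`-graph with the weak Erdős–Szekeres property equals `(k−1)²+1`, and likewise for the
strong Erdős–Szekeres property: there is a `k`-graph on `(k−1)²+1` vertices with the
strong property, while no `k`-graph on at most `(k−1)²` vertices has even the weak
property. That is, `n_wES(k) = n_sES(k) = (k−1)²+1`. -/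
theorem stmt_11 (k : ℕ) (hk : 2 ≤ k) :
    (∃ E : Finset (Finset (Fin ((k - 1) ^ 2 + 1))),
      (∀ e ∈ E, e.card = k) ∧
      (∀ σ τ : Fin ((k - 1) ^ 2 + 1) → ℕ,
        Function.Injective σ → Function.Injective τ →
          ∃ e ∈ E, (∀ x ∈ e, ∀ y ∈ e, σ x < σ y → τ x < τ y) ∨
                   (∀ x ∈ e, ∀ y ∈ e, σ x < σ y → τ y < τ x))) ∧
    (∀ (V : Type) [Fintype V], Fintype.card V ≤ (k - 1) ^ 2 →
      ∀ E : Finset (Finset V), (∀ e ∈ E, e.card = k) →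
        ¬ ∃ σ : V → ℕ, Function.Injective σ ∧
          ∀ τ : V → ℕ, Function.Injective τ →
            ∃ e ∈ E, (∀ x ∈ e, ∀ y ∈ e, σ x < σ y → τ x < τ y) ∨
                     (∀ x ∈ e, ∀ y ∈ e, σ x < σ y → τ y < τ x)) := by
  set n := (k - 1) ^ 2 + 1 with hn
  constructor
  · -- upper bound: complete k-graph works, by Erdős–Szekeres
    refine ⟨Finset.powersetCard k Finset.univ, ?_, ?_⟩
    · intro e he
      rw [Finset.mem_powersetCard_univ] at he
      exact he
    · intro σ τ hσ hτ
      set π := Tuple.sort σ with hπ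
      have hσπ : StrictMono (σ ∘ π) :=
        (Tuple.monotone_sort σ).strictMono_of_injective (hσ.comp π.injective)
      have hfn : (k - 1) * (k - 1) < n := by simp [hn, pow_two]
      have hτπ : Injective (τ ∘ π) := hτ.comp π.injective
      rcases aux_erdos_szekeres (r := k - 1) (s := k - 1) hfn hτπ with ⟨t, ht, hmono⟩ | ⟨t, ht, hanti⟩
      · obtain ⟨t', ht'sub, ht'card⟩ := Finset.exists_subset_card_eq (s := t) (n := k) (by omega : k ≤ t.card)
        refine ⟨t'.image π, ?_, Or.inl ?_⟩
        · rw [Finset.mem_powersetCard_univ, Finset.card_image_of_injective _ π.injective, ht'card]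
        intro x hx y hy hxy
        rw [Finset.mem_image] at hx hy
        obtain ⟨i, hi, rfl⟩ := hx
        obtain ⟨j, hj, rfl⟩ := hy
        have hij : i < j := hσπ.lt_iff_lt.mp hxy
        exact hmono (ht'sub hi) (ht'sub hj) hij
      · obtain ⟨t', ht'sub, ht'card⟩ := Finset.exists_subset_card_eq (s := t) (n := k) (by omega : k ≤ t.card)
        refine ⟨t'.image π, ?_, Or.inr ?_⟩
        · rw [Finset.mem_powersetCard_univ, Finset.card_image_of_injective _ π.injective, ht'card]
        intro x hx y hy hxy
        rw [Finset.mem_image] at hx hy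
        obtain ⟨i, hi, rfl⟩ := hx
        obtain ⟨j, hj, rfl⟩ := hy
        have hij : i < j := hσπ.lt_iff_lt.mp hxy
        exact hanti (ht'sub hi) (ht'sub hj) hij
  · -- lower bound
    intro V _ hV E hE ⟨σ, hσ, hgood⟩
    classical
    set m := k - 1 with hm
    have hm1 : 1 ≤ m := by omega
    -- rank function
    set r : V → ℕ := fun x => (Finset.univ.filter fun y => σ y < σ x).card with hr
    have hmono : ∀ x y : V, σ x < σ y → r x < r y := by
      intro x y hxy
      apply Finset.card_lt_card
      constructor
      · intro z hz
        simp only [Finset.mem_filter, Finset.mem_univ, true_and] at hz ⊢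
        omega
      · intro hsub
        have hx : x ∈ Finset.univ.filter fun z => σ z < σ y := by
          simp [hxy]
        have := hsub hx
        simp at this
    have hiff : ∀ x y : V, σ x < σ y ↔ r x < r y := by
      intro x y
      constructor
      · exact hmono x y
      · intro h
        rcases lt_trichotomy (σ x) (σ y) with h' | h' | h'
        · exact h'
        · exact absurd (hσ h') (by rintro rfl; omega)
        · exact absurd (hmono y x h') (by omega)
    have hrinj : Injective r := by
      intro x y hxy
      by_contra hne
      rcases lt_trichotomy (σ x) (σ y) with h' | h' | h'
      · have := hmono x y h'; omega
      · exact hne (hσ h')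
      · have := hmono y x h'; omega
    have hrbound : ∀ x : V, r x < m ^ 2 := by
      intro x
      have h1 : (Finset.univ.filter fun y => σ y < σ x) ⊆ Finset.univ.erase x := by
        intro z hz
        simp only [Finset.mem_filter, Finset.mem_univ, true_and] at hz
        simp only [Finset.mem_erase, Finset.mem_univ, and_true]
        rintro rfl; omega
      have h2 := Finset.card_le_card h1
      rw [Finset.card_erase_of_mem (Finset.mem_univ x), Finset.card_univ] at h2
      show (Finset.univ.filter fun y => σ y < σ x).card < m ^ 2
      have hx1 : 1 ≤ Fintype.card V := Fintype.card_pos_iff.mpr ⟨x⟩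
      have : 1 ≤ m ^ 2 := Nat.one_le_pow _ _ (by omega)
      omega
    -- block structure
    set q : V → ℕ := fun x => r x / m with hq
    have hqbound : ∀ x : V, q x ≤ m - 1 := by
      intro x
      have h1 : r x < m * m := by have := hrbound x; rw [pow_two] at this; omega
      have h2 : r x / m < m := Nat.div_lt_of_lt_mul (by omega)
      show r x / m ≤ m - 1
      omega
    set τ : V → ℕ := fun x => (m - 1 - q x) * m + r x % m with hτ
    have hτval : ∀ x : V, r x = q x * m + r x % m := by
      intro x
      exact (Nat.div_add_mod' (r x) m).symm
    have hmodlt : ∀ x : V, r x % m < m := fun x => Nat.mod_lt _ (by omega)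
    -- block comparison lemmas
    have hblt : ∀ x y : V, q x < q y → τ y < τ x := by
      intro x y hxy
      have h1 := hqbound x
      have h2 := hqbound y
      have hA : m - 1 - q y + 1 ≤ m - 1 - q x := by omega
      calc τ y < (m - 1 - q y) * m + m := by have := hmodlt y; simp only [hτ]; omega
        _ = (m - 1 - q y + 1) * m := by ring
        _ ≤ (m - 1 - q x) * m := Nat.mul_le_mul_right m hA
        _ ≤ τ x := Nat.le_add_right _ _
    have hsame : ∀ x y : V, q x = q y → r x < r y → τ x < τ y := by
      intro x y hqeq hlt
      have h1 := hτval x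
      have h2 := hτval y
      have : r x % m < r y % m := by
        rw [hqeq] at h1; omega
      simp only [hτ, hqeq]
      omega
    have hτinj : Injective τ := by
      intro x y hxy
      by_contra hne
      have hrne : r x ≠ r y := fun h => hne (hrinj h)
      rcases lt_trichotomy (q x) (q y) with h' | h' | h'
      · have := hblt x y h'; omega
      · rcases Nat.lt_or_ge (r x) (r y) with h'' | h''
        · have := hsame x y h' h''; omega
        · have := hsame y x h'.symm (by omega); omega
      · have := hblt y x h'; omega
    obtain ⟨e, heE, hcons⟩ := hgood τ hτinj
    have hecard : e.card = k := hE e heE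
    rcases hcons with hinc | hdec
    · -- increasing: q constant on e, so rem injective into range m
      have hqconst : ∀ x ∈ e, ∀ y ∈ e, q x = q y := by
        intro x hx y hy
        by_contra hne
        rcases Nat.lt_or_ge (q x) (q y) with h' | h'
        · have h1 : r x < r y := by
            have := Nat.div_le_div_right (c := m) (le_of_lt (Nat.lt_of_div_lt_div h'))
            exact Nat.lt_of_div_lt_div h'
          have h2 : σ x < σ y := (hiff x y).mpr h1
          have := hinc x hx y hy h2
          have := hblt x y h'
          omega
        · have h'' : q y < q x := by omega
          have h1 : r y < r x := Nat.lt_of_div_lt_div h''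
          have h2 : σ y < σ x := (hiff y x).mpr h1
          have := hinc y hy x hx h2
          have := hblt y x h''
          omega
      have himg : e.image (fun x => r x % m) ⊆ Finset.range m := by
        intro v hv
        rw [Finset.mem_image] at hv
        obtain ⟨x, _, rfl⟩ := hv
        exact Finset.mem_range.mpr (hmodlt x)
      have hinj2 : Set.InjOn (fun x => r x % m) e := by
        intro x hx y hy hxy
        apply hrinj
        have h1 := hτval x
        have h2 := hτval y
        have h3 := hqconst x hx y hy
        rw [h3] at h1
        simp only at hxy
        omega
      have := Finset.card_le_card himg
      rw [Finset.card_image_of_injOn hinj2, Finset.card_range, hecard] at this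
      omega
    · -- decreasing: q injective on e into range m
      have hinj2 : Set.InjOn q e := by
        intro x hx y hy hxy
        by_contra hne
        have hsne : σ x ≠ σ y := fun h => hne (hσ h)
        rcases Nat.lt_or_ge (σ x) (σ y) with h' | h'
        · have h1 : r x < r y := hmono x y h'
          have := hsame x y hxy h1
          have := hdec x hx y hy h'
          omega
        · have h'' : σ y < σ x := by omega
          have h1 : r y < r x := hmono y x h''
          have := hsame y x hxy.symm h1
          have := hdec y hy x hx h''
          omega
      have himg : e.image q ⊆ Finset.range m := by
        intro v hv
        rw [Finset.mem_image] at hv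
        obtain ⟨x, _, rfl⟩ := hv
        exact Finset.mem_range.mpr (by have := hqbound x; omega)
      have := Finset.card_le_card himg
      rw [Finset.card_image_of_injOn hinj2, Finset.card_range, hecard] at this
      omega
end

section
/- Let k ≥ 2 and let H be a k-uniform hypergraph on n vertices with m edges (a family of m distinct k-element subsets of the vertex set). If n!·(1 − 1/k!)^m < 1, then the edges of H can be oriented (each k-element edge replaced by an ordered k-tuple of its vertices) so that the resulting oriented k-graph has Property O. -/
/-- Let `k ≥ 2` and let `H` be a `k`-uniform hypergraph on `n`
vertices with `m` edges. If `n!·(1 − 1/k!)^m < 1`, then the edges of `H` can be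
oriented (each `k`-element edge replaced by an ordered `k`-tuple of its vertices)
so that the resulting oriented `k`-graph has Property O. -/
theorem stmt_13 (k n m : ℕ) (hk : 2 ≤ k) (V : Type*) [Fintype V]
    (hV : Fintype.card V = n)
    (E : Finset (Finset V))
    (hcard : ∀ e ∈ E, e.card = k)
    (hm : E.card = m)
    (h : (Nat.factorial n : ℝ) * (1 - 1 / (Nat.factorial k : ℝ)) ^ m < 1) :
    ∃ o : Finset V → (Fin k → V),
      (∀ e ∈ E, Function.Injective (o e) ∧ Set.range (o e) = (e : Set V)) ∧
      (∀ σ : V → ℕ, Function.Injective σ →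
        ∃ e ∈ E, ∀ i j : Fin k, i < j → σ (o e i) < σ (o e j)) := by
  classical
  -- E is nonempty
  have hE : E.Nonempty := by
    by_contra hne
    rw [Finset.not_nonempty_iff_eq_empty] at hne
    subst hne
    simp only [Finset.card_empty] at hm
    subst hm
    simp only [pow_zero, mul_one] at h
    have : (1 : ℝ) ≤ (Nat.factorial n : ℝ) := by
      exact_mod_cast Nat.one_le_iff_ne_zero.mpr (Nat.factorial_ne_zero n)
    linarith
  -- V is nonempty
  obtain ⟨e₀, he₀⟩ := hE
  have hVne : Nonempty V := by
    have h1 : e₀.card = k := hcard e₀ he₀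
    have h2 : e₀.Nonempty := Finset.card_pos.mp (by omega)
    exact ⟨h2.choose⟩
  obtain ⟨v₀⟩ := hVne
  -- key numeric inequality in ℕ
  have hkfac : 0 < Nat.factorial k := Nat.factorial_pos k
  have hnat : Nat.factorial n * (Nat.factorial k - 1) ^ m < Nat.factorial k ^ m := by
    have hkfR : (0 : ℝ) < (Nat.factorial k : ℝ) := by exact_mod_cast hkfac
    have hrewrite : (1 - 1 / (Nat.factorial k : ℝ)) =
        ((Nat.factorial k - 1 : ℕ) : ℝ) / (Nat.factorial k : ℝ) := by
      rw [Nat.cast_sub (by omega)]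
      field_simp
      simp
    rw [hrewrite, div_pow, ← mul_div_assoc, div_lt_one (by positivity)] at h
    exact_mod_cast h
  -- setup
  set ES := {e : Finset V // e ∈ E} with hES
  have hcardES : Fintype.card ES = m := by
    simpa [hES] using hm
  let φ : ∀ e : ES, {x // x ∈ e.1} ≃ Fin k := fun e => Finset.equivFinOfCardEq (hcard e.1 e.2)
  -- consistency predicate
  let P : ES → (V ≃ Fin n) → Equiv.Perm (Fin k) → Prop :=
    fun e τ π => StrictMono (fun i : Fin k => τ ((φ e).symm (π i) : V))
  -- for every edge and order there exists a consistent permutation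
  have hex : ∀ (e : ES) (τ : V ≃ Fin n), ∃ π, P e τ π := by
    intro e τ
    set f : Fin k → Fin n := fun i => τ ((φ e).symm i : V) with hf
    have hfinj : Function.Injective f := by
      intro a b hab
      have h1 := τ.injective hab
      have h2 := Subtype.val_injective h1
      exact (φ e).symm.injective h2
    refine ⟨Tuple.sort f, ?_⟩
    have hmono : Monotone (f ∘ Tuple.sort f) := Tuple.monotone_sort f
    have hinj : Function.Injective (f ∘ Tuple.sort f) :=
      hfinj.comp (Tuple.sort f).injective
    exact hmono.strictMono_of_injective hinj
  -- the space of orientations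
  let Ω := ES → Equiv.Perm (Fin k)
  have hΩcard : Fintype.card Ω = Nat.factorial k ^ m := by
    rw [Fintype.card_fun, Fintype.card_perm, Fintype.card_fin, hcardES]
  -- bad sets
  let Bad : (V ≃ Fin n) → Finset Ω :=
    fun τ => Finset.univ.filter (fun ω : Ω => ∀ e : ES, ¬ P e τ (ω e))
  have hBadcard : ∀ τ, (Bad τ).card ≤ (Nat.factorial k - 1) ^ m := by
    intro τ
    have hsub : Bad τ ⊆ Fintype.piFinset
        (fun e : ES => Finset.univ.filter (fun π => ¬ P e τ π)) := by
      intro ω hω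
      rw [Finset.mem_filter] at hω
      rw [Fintype.mem_piFinset]
      intro e
      exact Finset.mem_filter.mpr ⟨Finset.mem_univ _, hω.2 e⟩
    calc (Bad τ).card ≤ _ := Finset.card_le_card hsub
      _ = ∏ e : ES, (Finset.univ.filter (fun π => ¬ P e τ π)).card :=
          Fintype.card_piFinset _
      _ ≤ ∏ _e : ES, (Nat.factorial k - 1) := by
          apply Finset.prod_le_prod
          · intro e _; exact Nat.zero_le _
          · intro e _
            obtain ⟨π₀, hπ₀⟩ := hex e τ
            have hsub2 : Finset.univ.filter (fun π => ¬ P e τ π) ⊆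
                Finset.univ.erase π₀ := by
              intro π hπ
              rw [Finset.mem_filter] at hπ
              refine Finset.mem_erase.mpr ⟨?_, Finset.mem_univ _⟩
              intro hc; exact hπ.2 (hc ▸ hπ₀)
            calc (Finset.univ.filter (fun π => ¬ P e τ π)).card
                ≤ (Finset.univ.erase π₀).card := Finset.card_le_card hsub2
              _ = Nat.factorial k - 1 := by
                  rw [Finset.card_erase_of_mem (Finset.mem_univ _),
                    Finset.card_univ, Fintype.card_perm, Fintype.card_fin]
      _ = (Nat.factorial k - 1) ^ m := by
          rw [Finset.prod_const, Finset.card_univ, hcardES]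
  -- union bound
  have hTcard : Fintype.card (V ≃ Fin n) = Nat.factorial n := by
    rw [Fintype.card_equiv (Fintype.equivFinOfCardEq hV), hV]
  have hunion : (Finset.univ.biUnion Bad).card < Fintype.card Ω := by
    calc (Finset.univ.biUnion Bad).card
        ≤ ∑ τ : V ≃ Fin n, (Bad τ).card := Finset.card_biUnion_le
      _ ≤ ∑ _τ : V ≃ Fin n, (Nat.factorial k - 1) ^ m :=
          Finset.sum_le_sum (fun τ _ => hBadcard τ)
      _ = Nat.factorial n * (Nat.factorial k - 1) ^ m := by
          rw [Finset.sum_const, Finset.card_univ, hTcard, smul_eq_mul]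
      _ < Nat.factorial k ^ m := hnat
      _ = Fintype.card Ω := hΩcard.symm
  -- pick a good orientation
  have hexω : ∃ ω : Ω, ω ∉ Finset.univ.biUnion Bad := by
    by_contra hc
    push_neg at hc
    have hsub : (Finset.univ : Finset Ω) ⊆ Finset.univ.biUnion Bad :=
      fun ω _ => hc ω
    have hle := Finset.card_le_card hsub
    rw [Finset.card_univ] at hle
    omega
  obtain ⟨ω, hω⟩ := hexω
  -- define the orientation
  refine ⟨fun s => if hs : s ∈ E then fun i => ((φ ⟨s, hs⟩).symm (ω ⟨s, hs⟩ i) : V)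
    else fun _ => v₀, ?_, ?_⟩
  · intro e he
    simp only [dif_pos he]
    constructor
    · intro a b hab
      exact (ω ⟨e, he⟩).injective ((φ ⟨e, he⟩).symm.injective (Subtype.val_injective hab))
    · ext x
      simp only [Set.mem_range, Finset.mem_coe]
      constructor
      · rintro ⟨i, rfl⟩
        exact ((φ ⟨e, he⟩).symm (ω ⟨e, he⟩ i)).2
      · intro hx
        refine ⟨(ω ⟨e, he⟩).symm ((φ ⟨e, he⟩) ⟨x, hx⟩), ?_⟩
        simp
  · intro σ hσ
    -- build the order equivalence τ from σ
    set s : Finset ℕ := Finset.univ.image σ with hs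
    have hscard : s.card = n := by
      rw [hs, Finset.card_image_of_injective _ hσ, Finset.card_univ, hV]
    set g : Fin n ≃o {x // x ∈ s} := s.orderIsoOfFin hscard with hg
    have hmem : ∀ x : V, σ x ∈ s := by
      intro x; rw [hs]; exact Finset.mem_image_of_mem σ (Finset.mem_univ x)
    have hinv : ∀ i : Fin n, ∃! x : V, x ∈ Finset.univ ∧ σ x = (g i : ℕ) := by
      intro i
      obtain ⟨x, -, hx⟩ := Finset.mem_image.mp
        (show (g i : ℕ) ∈ Finset.univ.image σ from (g i).2)
      refine ⟨x, ⟨Finset.mem_univ x, hx⟩, ?_⟩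
      rintro y ⟨_, hy⟩
      exact hσ (hy.trans hx.symm)
    set τ : V ≃ Fin n :=
      { toFun := fun x => g.symm ⟨σ x, hmem x⟩
        invFun := fun i => Finset.univ.choose (fun x => σ x = (g i : ℕ)) (hinv i)
        left_inv := by
          intro x
          apply hσ
          have hch := Finset.choose_property (fun y => σ y = (g (g.symm ⟨σ x, hmem x⟩) : ℕ))
            Finset.univ (hinv _)
          rw [hch]
          simp
        right_inv := by
          intro i
          have hch := Finset.choose_property (fun y => σ y = (g i : ℕ)) Finset.univ (hinv i)
          simp only [OrderIso.symm_apply_eq]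
          exact Subtype.ext hch } with hτ
    have hτlt : ∀ x y : V, τ x < τ y ↔ σ x < σ y := by
      intro x y
      have h1 : τ x < τ y ↔ (⟨σ x, hmem x⟩ : {x // x ∈ s}) < ⟨σ y, hmem y⟩ := by
        rw [hτ]
        exact g.symm.lt_iff_lt
      rw [h1, Subtype.mk_lt_mk]
    -- ω is good for τ
    have hωτ : ω ∉ Bad τ := fun hc =>
      hω (Finset.mem_biUnion.mpr ⟨τ, Finset.mem_univ _, hc⟩)
    have hgood : ∃ e : ES, P e τ (ω e) := by
      by_contra hc
      push_neg at hc
      exact hωτ (Finset.mem_filter.mpr ⟨Finset.mem_univ _, hc⟩)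
    obtain ⟨e, hPe⟩ := hgood
    refine ⟨e.1, e.2, ?_⟩
    intro i j hij
    simp only [dif_pos e.2]
    have hlt := hPe hij
    rw [hτlt] at hlt
    exact hlt
end

section
/- Let k ≥ 3 and n = (k−1)² + 1, and let a₁, a₂, …, a_n be a sequence of distinct real numbers. Then there exist indices i₁ < i₂ < ⋯ < i_k such that the subsequence a_{i₁}, a_{i₂}, …, a_{i_k} is strictly monotone (increasing or decreasing) and moreover either i_k ≤ n−1, or (i_{k−1}, i_k) = (n−1, n). -/
open Finset Function OrderDual

namespace Stmt14Aux

variable {α : Type*} [LinearOrder α] {N : ℕ}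

/-- The collection of increasing subsequences (as finsets) ending at `i`. -/
def chains (f : Fin N → α) (i : Fin N) : Finset (Finset (Fin N)) :=
  univ.powerset.filter fun t => t.max = i ∧ StrictMonoOn f ↑t

lemma singleton_mem_chains (f : Fin N → α) (i : Fin N) : {i} ∈ chains f i := by
  simp [chains, StrictMonoOn]

lemma card_nonempty (f : Fin N → α) (i : Fin N) :
    ((chains f i).image Finset.card).Nonempty :=
  ⟨1, mem_image.2 ⟨{i}, singleton_mem_chains f i, card_singleton i⟩⟩

/-- Length of the longest increasing subsequence ending at `i`. -/
def A (f : Fin N → α) (i : Fin N) : ℕ :=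
  ((chains f i).image Finset.card).max' (card_nonempty f i)

lemma one_le_A (f : Fin N → α) (i : Fin N) : 1 ≤ A f i :=
  le_max' _ _ (mem_image.2 ⟨{i}, singleton_mem_chains f i, card_singleton i⟩)

lemma exists_chain (f : Fin N → α) (i : Fin N) :
    ∃ t : Finset (Fin N), t.max = i ∧ StrictMonoOn f ↑t ∧ t.card = A f i := by
  have h := max'_mem _ (card_nonempty f i)
  rw [mem_image] at h
  obtain ⟨t, ht, hc⟩ := h
  rw [chains, mem_filter] at ht
  exact ⟨t, ht.2.1, ht.2.2, hc⟩

lemma chain_card_le (f : Fin N → α) {i : Fin N} {t : Finset (Fin N)}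
    (h1 : t.max = i) (h2 : StrictMonoOn f ↑t) : t.card ≤ A f i :=
  le_max' _ _ (mem_image.2 ⟨t, by simp [chains, h1, h2], rfl⟩)

lemma A_lt_A (f : Fin N → α) {i j : Fin N} (hij : i < j) (hf : f i < f j) :
    A f i < A f j := by
  letI : DecidableEq (Fin N) := LinearOrder.toDecidableEq
  obtain ⟨t, ht1, ht2, ht3⟩ := exists_chain f i
  have hit : i ∈ t := mem_of_max ht1
  have hjt : j ∉ t := fun h => absurd (le_max_of_eq h ht1) (not_le.2 hij)
  have hmax : (insert j t).max = j := by
    have h : (insert j t).max = max (↑j) t.max := Finset.max_insert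
    rw [ht1, max_eq_left (WithBot.coe_le_coe.2 hij.le)] at h
    exact h
  have hmono : StrictMonoOn f ↑(insert j t) := by
    simp only [StrictMonoOn, coe_insert, Set.mem_insert_iff, mem_coe]
    rintro x (rfl | hx) y (rfl | hy) hxy
    · exact absurd hxy (lt_irrefl _)
    · exact absurd (le_max_of_eq hy ht1) (not_le.2 (hij.trans hxy))
    · refine lt_of_le_of_lt ?_ hf
      rcases lt_or_eq_of_le (le_max_of_eq hx ht1) with h | h
      · exact le_of_lt (ht2 hx hit h)
      · rw [h]
    · exact ht2 hx hy hxy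
  have hcard := chain_card_le f hmax hmono
  rw [card_insert_of_notMem hjt, ht3] at hcard
  omega

/-- Extraction: from a finset chain of size `K` ending at the top index `M-1`, together
with the last point `M` beyond, build a strictly monotone subsequence `s` of length `K+1`
whose last two indices are `M-1` and `M`. -/
lemma build {K M : ℕ} (hK : 2 ≤ K) (hM : 1 ≤ M) (a : Fin (M + 1) → α)
    (t : Finset (Fin M)) (htc : t.card = K)
    (hmax : t.max = (⟨M - 1, by omega⟩ : Fin M))
    (hmono : StrictMonoOn (fun j : Fin M => a j.castSucc) ↑t)
    (hlast : a (Fin.castSucc ⟨M - 1, by omega⟩) < a (Fin.last M)) :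
    ∃ s : Fin (K + 1) → Fin (M + 1), StrictMono s ∧ StrictMono (a ∘ s) ∧
      (s ⟨K - 1, by omega⟩ : ℕ) = M - 1 ∧ (s ⟨K, by omega⟩ : ℕ) = M := by
  have hi₀t : (⟨M - 1, by omega⟩ : Fin M) ∈ t := mem_of_max hmax
  have hle : ∀ x ∈ t, x ≤ (⟨M - 1, by omega⟩ : Fin M) := fun x hx => le_max_of_eq hx hmax
  let u : Fin K ≃o {x // x ∈ t} := t.orderIsoOfFin htc
  have hu_mem : ∀ j, (u j : Fin M) ∈ t := fun j => (u j).2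
  have hu_mono : StrictMono (fun j => (u j : Fin M)) := fun p q h => u.strictMono h
  -- the top of `u` is the max of `t`
  have htopu : (u ⟨K - 1, by omega⟩ : Fin M) = ⟨M - 1, by omega⟩ := by
    refine le_antisymm (hle _ (hu_mem _)) ?_
    obtain ⟨j, hj⟩ : ∃ j, u j = ⟨(⟨M - 1, by omega⟩ : Fin M), hi₀t⟩ :=
      ⟨u.symm _, u.apply_symm_apply _⟩
    have hj' : (u j : Fin M) = ⟨M - 1, by omega⟩ := by rw [hj]
    rw [← hj']
    exact Subtype.coe_le_coe.2 (u.monotone (by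
      change j.1 ≤ K - 1
      have := j.isLt
      omega))
  let v : Fin K → Fin (M + 1) := fun j => Fin.castSucc (u j)
  let s : Fin (K + 1) → Fin (M + 1) := Fin.snoc v (Fin.last M)
  have hsnoc_cast : ∀ j : Fin K, s j.castSucc = v j := fun j => by simp [s]
  have hsnoc_last : s (Fin.last K) = Fin.last M := by simp [s]
  have hv_lt : ∀ j, v j < Fin.last M := fun j => Fin.castSucc_lt_last _
  -- bound the values along `v`
  have hvb : ∀ j, a (v j) ≤ a (Fin.castSucc ⟨M - 1, by omega⟩) := by
    intro j
    rcases lt_or_eq_of_le (hle _ (hu_mem j)) with h | h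
    · exact le_of_lt (hmono (hu_mem j) hi₀t h)
    · rw [show v j = Fin.castSucc ⟨M - 1, by omega⟩ from congrArg Fin.castSucc h]
  refine ⟨s, ?_, ?_, ?_, ?_⟩
  · -- StrictMono s
    intro p q hpq
    rcases Fin.eq_castSucc_or_eq_last p with ⟨p', rfl⟩ | rfl
    · rcases Fin.eq_castSucc_or_eq_last q with ⟨q', rfl⟩ | rfl
      · rw [hsnoc_cast, hsnoc_cast]
        exact Fin.castSucc_lt_castSucc_iff.2
          (hu_mono (Fin.castSucc_lt_castSucc_iff.1 hpq))
      · rw [hsnoc_cast, hsnoc_last]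
        exact hv_lt p'
    · exact absurd hpq (not_lt.2 (Fin.le_last q))
  · -- StrictMono (a ∘ s)
    intro p q hpq
    rcases Fin.eq_castSucc_or_eq_last p with ⟨p', rfl⟩ | rfl
    · rcases Fin.eq_castSucc_or_eq_last q with ⟨q', rfl⟩ | rfl
      · simp only [comp_apply, hsnoc_cast]
        exact hmono (hu_mem p') (hu_mem q')
          (hu_mono (Fin.castSucc_lt_castSucc_iff.1 hpq))
      · simp only [comp_apply, hsnoc_cast, hsnoc_last]
        exact lt_of_le_of_lt (hvb p') hlast
    · exact absurd hpq (not_lt.2 (Fin.le_last q))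
  · -- penultimate value
    have h1 : (⟨K - 1, by omega⟩ : Fin (K + 1)) = Fin.castSucc ⟨K - 1, by omega⟩ := rfl
    rw [h1, hsnoc_cast]
    show ((u ⟨K - 1, by omega⟩ : Fin M) : ℕ) = M - 1
    rw [htopu]
  · -- last value
    have h1 : (⟨K, by omega⟩ : Fin (K + 1)) = Fin.last K := rfl
    rw [h1, hsnoc_last]
    rfl

/-- Extraction for the easy case: a chain of size `K+1` inside the first `M` indices. -/
lemma buildA {K M : ℕ} (a : Fin (M + 1) → α) (t : Finset (Fin M)) (htc : t.card = K + 1)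
    (hmono : StrictMonoOn (fun j : Fin M => a j.castSucc) ↑t) :
    ∃ s : Fin (K + 1) → Fin (M + 1), StrictMono s ∧ StrictMono (a ∘ s) ∧
      ∀ j, (s j : ℕ) < M := by
  let u : Fin (K + 1) ≃o {x // x ∈ t} := t.orderIsoOfFin htc
  refine ⟨fun j => Fin.castSucc (u j), ?_, ?_, ?_⟩
  · exact fun p q h => Fin.castSucc_lt_castSucc_iff.2 (u.strictMono h)
  · exact fun p q h => hmono (u p).2 (u q).2 (u.strictMono h)
  · exact fun j => (u j : Fin M).2

set_option maxHeartbeats 1000000 in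
/-- The main combinatorial lemma. -/
lemma main {K M : ℕ} (hK : 2 ≤ K) (hM : M = K * K) (a : Fin (M + 1) → α)
    (ha : Function.Injective a) :
    ∃ s : Fin (K + 1) → Fin (M + 1), StrictMono s ∧
      (StrictMono (a ∘ s) ∨ StrictAnti (a ∘ s)) ∧
      (((s ⟨K, by omega⟩ : ℕ) < M) ∨
        ((s ⟨K - 1, by omega⟩ : ℕ) = M - 1 ∧ (s ⟨K, by omega⟩ : ℕ) = M)) := by
  have hM4 : 4 ≤ M := hM ▸ Nat.mul_le_mul hK hK
  have hM1 : 1 ≤ M := by omega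
  set b : Fin M → α := fun j => a j.castSucc with hb
  have hbinj : Function.Injective b := fun p q h =>
    Fin.castSucc_injective _ (ha h)
  by_cases hbig : ∃ i, K + 1 ≤ A b i ∨ K + 1 ≤ A (toDual ∘ b) i
  · -- easy case: a monotone subsequence of length `K+1` inside the first `M` indices
    obtain ⟨i, hi | hi⟩ := hbig
    · obtain ⟨t, ht1, ht2, ht3⟩ := exists_chain b i
      obtain ⟨t', ht't, ht'c⟩ := Finset.exists_subset_card_eq (show K + 1 ≤ t.card by omega)
      obtain ⟨s, hs1, hs2, hs3⟩ := buildA a t' ht'c (ht2.mono (coe_subset.2 ht't))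
      exact ⟨s, hs1, Or.inl hs2, Or.inl (hs3 _)⟩
    · obtain ⟨t, ht1, ht2, ht3⟩ := exists_chain (toDual ∘ b) i
      obtain ⟨t', ht't, ht'c⟩ := Finset.exists_subset_card_eq (show K + 1 ≤ t.card by omega)
      obtain ⟨s, hs1, hs2, hs3⟩ := buildA (toDual ∘ a) t' ht'c (ht2.mono (coe_subset.2 ht't))
      exact ⟨s, hs1, Or.inr (strictMono_toDual_comp_iff.1 hs2), Or.inl (hs3 _)⟩
  · push_neg at hbig
    -- all labels are at most K, so the labels exactly fill the K × K grid
    set P : Fin M → ℕ × ℕ := fun i => (A b i, A (toDual ∘ b) i) with hP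
    have hPinj : Function.Injective P := by
      apply Function.Injective.of_lt_imp_ne
      intro p q hpq hPeq
      have hne : b p ≠ b q := fun h => (ne_of_lt hpq) (hbinj h)
      rcases lt_or_gt_of_ne hne with h | h
      · exact absurd (congrArg Prod.fst hPeq) (ne_of_lt (A_lt_A b hpq h))
      · exact absurd (congrArg Prod.snd hPeq)
          (ne_of_lt (A_lt_A (toDual ∘ b) hpq (by exact toDual_lt_toDual.2 h)))
    have hsub : image P univ ⊆ Icc 1 K ×ˢ Icc 1 K := by
      rintro x hx
      rw [mem_image] at hx
      obtain ⟨i, -, rfl⟩ := hx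
      obtain ⟨h1, h2⟩ := hbig i
      have e1 := one_le_A b i
      have e2 := one_le_A (toDual ∘ b) i
      simp only [hP, mem_product, mem_Icc]
      omega
    have himg : image P univ = Icc 1 K ×ˢ Icc 1 K := by
      apply eq_of_subset_of_card_le hsub
      rw [card_image_of_injective _ hPinj, card_univ, Fintype.card_fin,
        card_product, Nat.card_Icc]
      have hKe : K + 1 - 1 = K := by omega
      rw [hKe, ← hM]
    have hKK : (K, K) ∈ image P univ := by
      rw [himg, mem_product]
      constructor <;> · rw [mem_Icc]; omega
    rw [mem_image] at hKK
    obtain ⟨i₀, -, hi₀⟩ := hKK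
    simp only [hP, Prod.mk.injEq] at hi₀
    obtain ⟨hA1, hA2⟩ := hi₀
    -- `i₀` must be the last index of `Fin M`
    have htop : ∀ j : Fin M, j ≤ i₀ := by
      intro j
      by_contra hj
      push_neg at hj
      have hne : b i₀ ≠ b j := fun h => (ne_of_lt hj) (hbinj h)
      rcases lt_or_gt_of_ne hne with h | h
      · have h' := A_lt_A b hj h
        have h'' := (hbig j).1
        omega
      · have h' := A_lt_A (toDual ∘ b) hj (by exact toDual_lt_toDual.2 h)
        have h'' := (hbig j).2
        omega
    have hi₀eq : i₀ = (⟨M - 1, by omega⟩ : Fin M) := by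
      have h1 : M - 1 ≤ (i₀ : ℕ) := by
        have h := htop ⟨M - 1, by omega⟩
        rw [Fin.le_def] at h
        simpa using h
      have h2 : (i₀ : ℕ) < M := i₀.isLt
      refine Fin.ext ?_
      show (i₀ : ℕ) = M - 1
      omega
    -- compare the last two values
    rcases lt_or_gt_of_ne (ha.ne (show Fin.castSucc ⟨M - 1, by omega⟩ ≠ Fin.last M by
        intro h
        have h' := congrArg Fin.val h
        simp [Fin.last] at h'
        omega)) with hcmp | hcmp
    · -- increasing ending
      obtain ⟨t, ht1, ht2, ht3⟩ := exists_chain b i₀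
      rw [hi₀eq] at ht1
      have ht2' : StrictMonoOn (fun j : Fin M => a j.castSucc) ↑t := ht2
      obtain ⟨s, hs1, hs2, hs3, hs4⟩ := build hK hM1 a t (by omega) ht1 ht2' hcmp
      exact ⟨s, hs1, Or.inl hs2, Or.inr ⟨hs3, hs4⟩⟩
    · -- decreasing ending
      obtain ⟨t, ht1, ht2, ht3⟩ := exists_chain (toDual ∘ b) i₀
      rw [hi₀eq] at ht1
      have ht2' : StrictMonoOn (fun j : Fin M => (toDual ∘ a) j.castSucc) ↑t := ht2
      obtain ⟨s, hs1, hs2, hs3, hs4⟩ := build hK hM1 (toDual ∘ a) t (by omega) ht1 ht2'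
        (by exact toDual_lt_toDual.2 hcmp)
      exact ⟨s, hs1, Or.inr (strictMono_toDual_comp_iff.1 hs2), Or.inr ⟨hs3, hs4⟩⟩

end Stmt14Aux

set_option maxHeartbeats 1000000 in
/-- Let `k ≥ 3` and `n = (k−1)² + 1`, and let `a₁, …, a_n` be a
sequence of distinct real numbers. Then there exist indices `i₁ < i₂ < ⋯ < i_k`
(here encoded via a strictly monotone `s : Fin k → Fin n`, zero-based) such that the
subsequence `a_{i₁}, …, a_{i_k}` is strictly monotone (increasing or decreasing) and
moreover either `i_k ≤ n−1` (zero-based: the last index is `< n−1`), or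
`(i_{k−1}, i_k) = (n−1, n)` (zero-based: the last two indices are `n−2` and `n−1`). -/
theorem stmt_14 (k n : ℕ) (hk : 3 ≤ k) (hn : n = (k - 1) ^ 2 + 1)
    (a : Fin n → ℝ) (ha : Function.Injective a) :
    ∃ s : Fin k → Fin n, StrictMono s ∧
      (StrictMono (a ∘ s) ∨ StrictAnti (a ∘ s)) ∧
      (((s ⟨k - 1, by omega⟩ : ℕ) < n - 1) ∨
        ((s ⟨k - 2, by omega⟩ : ℕ) = n - 2 ∧ (s ⟨k - 1, by omega⟩ : ℕ) = n - 1)) := by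
  obtain ⟨K, rfl⟩ : ∃ K, k = K + 1 := ⟨k - 1, by omega⟩
  have hn2 : n = K * K + 1 := by rw [hn]; simp [pow_two]
  subst hn2
  obtain ⟨s, h1, h2, h3⟩ := Stmt14Aux.main (by omega) rfl a ha
  exact ⟨s, h1, h2, h3⟩
end

section
/- For every integer k ≥ 3, every oriented k-graph with Property O has at least k! + 1 edges; that is, f(k) ≥ k! + 1. -/
open Function

private lemma perm_sort_unique {j m : ℕ} {b : Fin j → Fin m} (hb : Function.Injective b)
    {τ₁ τ₂ : Equiv.Perm (Fin j)} (h1 : StrictMono (b ∘ τ₁)) (h2 : StrictMono (b ∘ τ₂)) :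
    τ₁ = τ₂ := by
  haveI hwf : WellFoundedLT (Fin j) := inferInstance
  have hr : Set.range (b ∘ τ₁) = Set.range (b ∘ τ₂) := by
    simp [Set.range_comp, τ₁.surjective.range_eq, τ₂.surjective.range_eq]
  have heq : b ∘ ⇑τ₁ = b ∘ ⇑τ₂ :=
    (@StrictMono.range_inj (Fin j) (Fin m) _ _ hwf _ _ h1 h2).1 hr
  exact Equiv.ext fun i => hb (congrFun heq i)

private lemma perm_strictMono_eq_one {k : ℕ} {τ : Equiv.Perm (Fin k)}
    (h : StrictMono fun i => τ i) : τ = 1 := by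
  refine perm_sort_unique (b := (id : Fin k → Fin k)) injective_id ?_ ?_
  · simpa [Function.comp_def] using h
  · simpa [Function.comp_def] using strictMono_id (α := Fin k)

private lemma count_strictMono {j m : ℕ} {X : Type*} [Fintype X] [DecidableEq X]
    (hm : Fintype.card X = m) (a : Fin j → X) (ha : Function.Injective a) :
    Nat.card {π : X ≃ Fin m // StrictMono fun i => π (a i)} * Nat.factorial j
      = Nat.factorial m := by
  classical
  -- the extension of a permutation of `Fin j` to a permutation of `X` along `a`
  let σ : Equiv.Perm (Fin j) → Equiv.Perm X := fun τ => τ.extendDomain (Equiv.ofInjective a ha)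
  have hσ : ∀ τ (i : Fin j), σ τ (a i) = a (τ i) := by
    intro τ i
    have := Equiv.Perm.extendDomain_apply_image (e := τ) (f := Equiv.ofInjective a ha) i
    simpa [Equiv.ofInjective_apply] using this
  -- sorting: every π admits a unique τ making things monotone
  have exsort : ∀ π : X ≃ Fin m, ∃ τ : Equiv.Perm (Fin j),
      StrictMono fun i => π (a (τ i)) := by
    intro π
    refine ⟨Tuple.sort (fun i => π (a i)), ?_⟩
    have hmono := Tuple.monotone_sort (fun i => π (a i))
    have hinj : Function.Injective ((fun i => π (a i)) ∘ (Tuple.sort (fun i => π (a i)))) :=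
      (π.injective.comp ha).comp (Equiv.injective _)
    exact hmono.strictMono_of_injective hinj
  choose s hs using exsort
  have hsu : ∀ (π : X ≃ Fin m) (τ : Equiv.Perm (Fin j)),
      (StrictMono fun i => π (a (τ i))) → s π = τ := by
    intro π τ hτ
    refine perm_sort_unique (b := fun i => π (a i)) (π.injective.comp ha) ?_ ?_
    · exact hs π
    · exact hτ
  -- the bijection
  let Φ : (X ≃ Fin m) ≃ {π : X ≃ Fin m // StrictMono fun i => π (a i)} × Equiv.Perm (Fin j) :=
    { toFun := fun π => (⟨(σ (s π)).trans π, by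
        have hval : ∀ i, ((σ (s π)).trans π) (a i) = π (a (s π i)) := by
          intro i; simp [Equiv.trans_apply, hσ]
        have := hs π
        intro i i' hlt
        dsimp only
        rw [hval, hval]
        exact this hlt⟩, s π)
      invFun := fun q => (σ q.2).symm.trans q.1
      left_inv := by
        intro π
        ext x
        simp [Equiv.trans_apply]
      right_inv := by
        rintro ⟨⟨π', hπ'⟩, τ⟩
        have hst : s ((σ τ).symm.trans π') = τ := by
          apply hsu
          intro i i' hlt
          have hv : ∀ i, ((σ τ).symm.trans π') (a (τ i)) = π' (a i) := by
            intro i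
            simp only [Equiv.trans_apply]
            congr 1
            rw [← hσ τ i, Equiv.symm_apply_apply]
          dsimp only
          rw [hv, hv]
          exact hπ' hlt
        ext x
        · simp [hst, Equiv.trans_apply, Equiv.apply_symm_apply, Equiv.symm_apply_apply]
        · simp only [hst] }
  have hcard := Nat.card_congr Φ
  rw [Nat.card_prod] at hcard
  have h1 : Nat.card (X ≃ Fin m) = Nat.factorial m := by
    rw [Nat.card_eq_fintype_card, Fintype.card_equiv (Fintype.equivFinOfCardEq hm), hm]
  have h2 : Nat.card (Equiv.Perm (Fin j)) = Nat.factorial j := by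
    rw [Nat.card_eq_fintype_card, Fintype.card_perm, Fintype.card_fin]
  rw [h1, h2] at hcard
  exact hcard.symm

private lemma double_count {α β : Type*} [Fintype β] [DecidableEq α]
    (s : Finset α) (r : α → β → Prop) [∀ a b, Decidable (r a b)] :
    ∑ a ∈ s, (Finset.univ.filter (r a)).card = ∑ b : β, (s.filter (r · b)).card := by
  simp only [Finset.card_filter]
  exact Finset.sum_comm

set_option maxHeartbeats 1000000 in
/-- For every integer `k ≥ 3`, every oriented `k`-graph with
Property O has at least `k! + 1` edges; that is, `f(k) ≥ k! + 1`. -/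
theorem stmt_15 (k : ℕ) (hk : 3 ≤ k) (V : Type*) [Fintype V]
    (E : Finset (Fin k → V))
    (hinj : ∀ e ∈ E, Function.Injective e)
    (hdist : ∀ e ∈ E, ∀ f ∈ E, Set.range e = Set.range f → e = f)
    (hO : ∀ σ : V → ℕ, Function.Injective σ →
      ∃ e ∈ E, ∀ i j : Fin k, i < j → σ (e i) < σ (e j)) :
    Nat.factorial k + 1 ≤ E.card := by
  classical
  by_contra hcon
  push_neg at hcon
  have hEcard : E.card ≤ Nat.factorial k := by omega
  set n := Fintype.card V with hn
  -- every linear order (bijection onto `Fin n`) has a consistent edge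
  have hcons_of : ∀ π : V ≃ Fin n, ∃ e ∈ E, StrictMono fun i => π (e i) := by
    intro π
    obtain ⟨e, he, hmono⟩ := hO (fun v => (π v : ℕ))
      (fun u v h => π.injective (Fin.val_injective h))
    exact ⟨e, he, fun i i' hlt => Fin.lt_def.mpr (hmono i i' hlt)⟩
  -- each edge is consistent with exactly `n!/k!` orders
  have hCe : ∀ e ∈ E,
      (Finset.univ.filter fun π : V ≃ Fin n => StrictMono fun i => π (e i)).card
        * Nat.factorial k = Nat.factorial n := by
    intro e he
    have := count_strictMono (X := V) (m := n) rfl e (hinj e he)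
    rwa [Nat.card_eq_fintype_card, Fintype.card_subtype] at this
  have hΩ : Fintype.card (V ≃ Fin n) = Nat.factorial n := by
    rw [Fintype.card_equiv (Fintype.equivFinOfCardEq rfl)]
  set d : (V ≃ Fin n) → ℕ :=
    fun π => (E.filter fun e => StrictMono fun i => π (e i)).card with hd
  have hge : ∀ π : V ≃ Fin n, 1 ≤ d π := by
    intro π
    obtain ⟨e, he, hmono⟩ := hcons_of π
    exact Finset.card_pos.mpr ⟨e, Finset.mem_filter.mpr ⟨he, hmono⟩⟩
  have hdc := double_count (β := V ≃ Fin n) E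
    (fun e π => StrictMono fun i => π (e i))
  have hS1 : (∑ π : V ≃ Fin n, d π) * Nat.factorial k = E.card * Nat.factorial n := by
    rw [← hdc, Finset.sum_mul, Finset.sum_congr rfl hCe, Finset.sum_const, smul_eq_mul]
  have hSge : Nat.factorial n ≤ ∑ π : V ≃ Fin n, d π := by
    calc Nat.factorial n = ∑ _π : V ≃ Fin n, 1 := by simp [hΩ]
      _ ≤ ∑ π : V ≃ Fin n, d π := Finset.sum_le_sum fun π _ => hge π
  have hS : (∑ π : V ≃ Fin n, d π) = Nat.factorial n := by
    have hle : (∑ π : V ≃ Fin n, d π) * Nat.factorial k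
        ≤ Nat.factorial n * Nat.factorial k := by
      rw [hS1, mul_comm (Nat.factorial n) (Nat.factorial k)]
      exact Nat.mul_le_mul_right _ hEcard
    exact le_antisymm (Nat.le_of_mul_le_mul_right hle k.factorial_pos) hSge
  have hone : ∀ π : V ≃ Fin n, d π = 1 := by
    by_contra hno
    push_neg at hno
    obtain ⟨π0, hπ0⟩ := hno
    have h2 : 1 < d π0 := lt_of_le_of_ne (hge π0) (Ne.symm hπ0)
    have hlt : (∑ _π : V ≃ Fin n, 1) < ∑ π : V ≃ Fin n, d π :=
      Finset.sum_lt_sum (fun i _ => hge i) ⟨π0, Finset.mem_univ _, h2⟩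
    rw [hS] at hlt
    simp [hΩ] at hlt
  have hEk : E.card = Nat.factorial k := by
    rw [hS] at hS1
    have := hS1.symm
    rw [mul_comm (Nat.factorial n) (Nat.factorial k)] at this
    exact (Nat.eq_of_mul_eq_mul_right n.factorial_pos
      (by rw [mul_comm E.card, ← this, mul_comm])).symm
  -- pick an edge `e0`
  have hEne : E.Nonempty := Finset.card_pos.mp (by rw [hEk]; exact k.factorial_pos)
  obtain ⟨e0, he0⟩ := hEne
  have hinj0 : Function.Injective e0 := hinj e0 he0
  have hkn : k ≤ n := by
    have := Fintype.card_le_of_injective e0 hinj0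
    simpa using this
  set p : V → Prop := fun v => v ∈ Set.range e0 with hp
  have hcards : Fintype.card {v // p v} = k := by
    have h := Fintype.card_congr (Equiv.ofInjective e0 hinj0).symm
    rw [Fintype.card_fin] at h
    exact h
  have hcardc : Fintype.card {v // ¬ p v} = n - k := by
    rw [Fintype.card_subtype_compl, hcards]
  let c2 : {v // ¬ p v} ≃ Fin (n - k) := Fintype.equivFinOfCardEq hcardc
  have hsplit : k + (n - k) = n := Nat.add_sub_cancel' hkn
  let θ : Fin k ⊕ Fin (n - k) ≃ Fin n := finSumFinEquiv.trans (finCongr hsplit)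
  let ψ : V ≃ Fin k ⊕ Fin (n - k) :=
    (Equiv.sumCompl p).symm.trans
      (Equiv.sumCongr (Equiv.ofInjective e0 hinj0).symm c2)
  let PI : Equiv.Perm (Fin k) → (V ≃ Fin n) := fun τ =>
    ψ.trans ((Equiv.sumCongr (τ : Fin k ≃ Fin k) (Equiv.refl (Fin (n - k)))).trans θ)
  have hψa : ∀ i : Fin k, ψ (e0 i) = Sum.inl i := by
    intro i
    have hpi : p (e0 i) := ⟨i, rfl⟩
    simp only [ψ, Equiv.trans_apply, Equiv.sumCompl_symm_apply_of_pos hpi,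
      Equiv.sumCongr_apply, Sum.map_inl]
    exact congrArg Sum.inl (Equiv.ofInjective_symm_apply hinj0 i)
  have hAval : ∀ (τ : Equiv.Perm (Fin k)) (i : Fin k),
      ((PI τ) (e0 i) : Fin n).val = (τ i).val := by
    intro τ i
    simp only [PI, Equiv.trans_apply, hψa, Equiv.sumCongr_apply, Sum.map_inl, θ,
      finSumFinEquiv_apply_left, finCongr_apply, Fin.coe_cast, Fin.coe_castAdd]
  have hBval : ∀ (τ : Equiv.Perm (Fin k)) (v : V) (hv : ¬ p v),
      ((PI τ) v : Fin n).val = k + (c2 ⟨v, hv⟩).val := by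
    intro τ v hv
    simp only [PI, Equiv.trans_apply, ψ, Equiv.sumCompl_symm_apply_of_neg hv,
      Equiv.sumCongr_apply, Sum.map_inr, Equiv.refl_apply, θ,
      finSumFinEquiv_apply_right, finCongr_apply, Fin.coe_cast, Fin.coe_natAdd]
  have hBge : ∀ (τ : Equiv.Perm (Fin k)) (v : V), ¬ p v → k ≤ ((PI τ) v : Fin n).val := by
    intro τ v hv
    rw [hBval τ v hv]
    exact Nat.le_add_right _ _
  have hBeq : ∀ (τ τ' : Equiv.Perm (Fin k)) (v : V), ¬ p v → (PI τ) v = (PI τ') v := by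
    intro τ τ' v hv
    apply Fin.ext
    rw [hBval τ v hv, hBval τ' v hv]
  -- second double count over the `k!` orders `PI τ`
  set B : (Fin k → V) → Finset (Equiv.Perm (Fin k)) :=
    fun e => Finset.univ.filter fun τ => StrictMono fun i => (PI τ) (e i) with hB
  have hdc2 := double_count (β := Equiv.Perm (Fin k)) E
    (fun e τ => StrictMono fun i => (PI τ) (e i))
  have hsum : ∑ e ∈ E, (B e).card = Nat.factorial k := by
    rw [hB, hdc2]
    have h1 : ∀ τ ∈ (Finset.univ : Finset (Equiv.Perm (Fin k))),
        (E.filter fun e => StrictMono fun i => (PI τ) (e i)).card = 1 :=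
      fun τ _ => hone (PI τ)
    rw [Finset.sum_congr rfl h1, Finset.sum_const, smul_eq_mul, mul_one,
      Finset.card_univ, Fintype.card_perm, Fintype.card_fin]
  -- the term of `e0` is exactly 1
  have hBe0 : B e0 = {1} := by
    ext τ
    simp only [hB, Finset.mem_filter, Finset.mem_univ, true_and, Finset.mem_singleton]
    constructor
    · intro h
      apply perm_strictMono_eq_one
      intro i i' hlt
      have h2 := h hlt
      rw [Fin.lt_def, hAval, hAval] at h2
      exact h2
    · rintro rfl
      intro i i' hlt
      rw [Fin.lt_def, hAval, hAval]
      simpa using hlt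
  -- every other term is divisible by k
  have hdvd : ∀ e ∈ E, e ≠ e0 → k ∣ (B e).card := by
    intro e he hne
    by_cases hBne : (B e).Nonempty
    swap
    · rw [Finset.not_nonempty_iff_eq_empty] at hBne
      rw [hBne, Finset.card_empty]
      exact dvd_zero k
    obtain ⟨τ1, hτ1mem⟩ := hBne
    have hτ1 : StrictMono fun i => (PI τ1) (e i) := by
      rw [hB] at hτ1mem
      exact (Finset.mem_filter.mp hτ1mem).2
    set P : Finset (Fin k) := Finset.univ.filter (fun i => p (e i)) with hPdef
    set j : ℕ := P.card with hj
    have hPne : ∃ i, ¬ p (e i) := by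
      by_contra hall
      push_neg at hall
      have hsub : Set.range e ⊆ Set.range e0 := by
        rintro _ ⟨i, rfl⟩
        exact hall i
      have hrange : Set.range e = Set.range e0 := by
        apply Set.eq_of_subset_of_ncard_le hsub _ (Set.finite_range e0)
        rw [← Nat.card_coe_set_eq, ← Nat.card_coe_set_eq,
          Nat.card_range_of_injective hinj0, Nat.card_range_of_injective (hinj e he)]
      exact hne (hdist e he e0 he0 hrange)
    have hjk : j < k := by
      obtain ⟨i0, hi0⟩ := hPne
      have hss : P ⊂ Finset.univ := by
        refine ⟨Finset.subset_univ _, fun hsub => hi0 ?_⟩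
        have := hsub (Finset.mem_univ i0)
        exact (Finset.mem_filter.mp this).2
      calc j = P.card := hj
        _ < (Finset.univ : Finset (Fin k)).card := Finset.card_lt_card hss
        _ = k := by simp
    set ι : Fin j ≃o {x : Fin k // x ∈ P} := P.orderIsoOfFin hj.symm with hι
    have hmem : ∀ l : Fin j, e ((ι l : Fin k)) ∈ Set.range e0 :=
      fun l => (Finset.mem_filter.mp (ι l).2).2
    set a : Fin j → Fin k :=
      fun l => (Equiv.ofInjective e0 hinj0).symm ⟨e (ι l), hmem l⟩ with ha
    have hae : ∀ l, e0 (a l) = e (ι l) :=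
      fun l => Equiv.apply_ofInjective_symm hinj0 ⟨e (ι l), hmem l⟩
    have hainj : Function.Injective a := by
      intro l l' hll
      have h1 : e0 (a l) = e0 (a l') := congrArg e0 hll
      rw [hae, hae] at h1
      have h2 : (ι l : Fin k) = (ι l' : Fin k) := hinj e he h1
      exact ι.injective (Subtype.ext h2)
    -- the key characterization of `B e`
    have hkey : ∀ τ : Equiv.Perm (Fin k),
        (StrictMono fun i => (PI τ) (e i)) ↔ (StrictMono fun l => τ (a l)) := by
      intro τ
      constructor
      · intro h l l' hlt
        have h1 : (ι l : Fin k) < (ι l' : Fin k) := by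
          exact_mod_cast ι.strictMono hlt
        have h2 : ((PI τ) (e ((ι l : Fin k)))).val < ((PI τ) (e ((ι l' : Fin k)))).val := h h1
        rw [← hae l, ← hae l', hAval, hAval] at h2
        show τ (a l) < τ (a l')
        exact h2
      · intro h i i' hlt
        have goal : ((PI τ) (e i)).val < ((PI τ) (e i')).val → (PI τ) (e i) < (PI τ) (e i') :=
          fun hv => Fin.lt_def.mpr hv
        apply goal
        by_cases h1 : p (e i) <;> by_cases h2 : p (e i')
        · -- both inside the range of e0
          have hi : i ∈ P := Finset.mem_filter.mpr ⟨Finset.mem_univ _, h1⟩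
          have hi' : i' ∈ P := Finset.mem_filter.mpr ⟨Finset.mem_univ _, h2⟩
          set l := ι.symm ⟨i, hi⟩ with hl
          set l' := ι.symm ⟨i', hi'⟩ with hl'
          have hll : l < l' := by
            rw [hl, hl', ι.symm.lt_iff_lt]
            exact Subtype.mk_lt_mk.mpr hlt
          have hei : e i = e0 (a l) := by
            rw [hae l, hl, OrderIso.apply_symm_apply]
          have hei' : e i' = e0 (a l') := by
            rw [hae l', hl', OrderIso.apply_symm_apply]
          rw [hei, hei', hAval, hAval]
          exact h hll
        · -- inside < outside
          obtain ⟨b, hb⟩ := h1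
          have hv1 : ((PI τ) (e i)).val < k := by
            rw [← hb, hAval]
            exact (τ b).isLt
          exact lt_of_lt_of_le hv1 (hBge τ _ h2)
        · -- outside then inside later in `e` : impossible by `hτ1`
          exfalso
          have h3 := hτ1 hlt
          rw [Fin.lt_def] at h3
          obtain ⟨b, hb⟩ := h2
          have hv' : ((PI τ1) (e i')).val < k := by
            rw [← hb, hAval]
            exact (τ1 b).isLt
          have hv : k ≤ ((PI τ1) (e i)).val := hBge τ1 _ h1
          exact absurd (lt_of_le_of_lt hv (h3.trans hv')) (lt_irrefl k)
        · -- both outside : independent of τ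
          rw [hBeq τ τ1 _ h1, hBeq τ τ1 _ h2]
          have h3 := hτ1 hlt
          rw [Fin.lt_def] at h3
          exact h3
    -- count `B e` via the general counting lemma
    have hcount := count_strictMono (X := Fin k) (m := k) (Fintype.card_fin k) a hainj
    have hcardeq : (B e).card
        = Nat.card {τ : Fin k ≃ Fin k // StrictMono fun l => τ (a l)} := by
      rw [Nat.card_eq_fintype_card, Fintype.card_subtype, hB]
      congr 1
      ext τ
      simp only [Finset.mem_filter, Finset.mem_univ, true_and]
      exact hkey τ
    rw [← hcardeq] at hcount
    -- now extract divisibility by k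
    obtain ⟨q, hq⟩ := Nat.factorial_dvd_factorial (Nat.le_pred_of_lt hjk)
    rw [Nat.pred_eq_sub_one] at hq
    have hkfac : Nat.factorial k = k * Nat.factorial (k - 1) :=
      (Nat.mul_factorial_pred (by omega)).symm
    have hmul : (B e).card * Nat.factorial j = (k * q) * Nat.factorial j := by
      rw [hcount, hkfac, hq]
      ring
    have hfin : (B e).card = k * q :=
      Nat.eq_of_mul_eq_mul_right j.factorial_pos hmul
    exact Dvd.intro q hfin.symm
  -- put everything together
  rw [← Finset.add_sum_erase E _ he0] at hsum
  rw [hBe0, Finset.card_singleton] at hsum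
  have hdvdsum : k ∣ ∑ e ∈ E.erase e0, (B e).card :=
    Finset.dvd_sum fun e he =>
      hdvd e (Finset.mem_of_mem_erase he) (Finset.ne_of_mem_erase he)
  have hkfacdvd : k ∣ Nat.factorial k := Dvd.intro _ (Nat.mul_factorial_pred (by omega))
  have hone' : k ∣ 1 := by
    have heq1 : Nat.factorial k - ∑ e ∈ E.erase e0, (B e).card = 1 :=
      Nat.sub_eq_of_eq_add hsum.symm
    rw [← heq1]
    exact Nat.dvd_sub hkfacdvd hdvdsum
  have hfle := Nat.le_of_dvd one_pos hone'
  exact absurd (hk.trans hfle) (by norm_num)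
end

section
/- For every integer k ≥ 3, there exists an oriented k-graph with Property O having exactly (⌊k/2⌋ + 1)·k! − ⌊k/2⌋·(k−1)! edges; that is, f(k) ≤ (⌊k/2⌋ + 1)·k! − ⌊k/2⌋·(k−1)!. -/
namespace S16

variable {c : ℕ}

abbrev P (c : ℕ) := Equiv.Perm (Fin c)
abbrev V (c : ℕ) := Fin c ⊕ (P c ⊕ P c × Fin c)

def xx (i : Fin c) : V c := Sum.inl i
def uu (ρ : P c) : V c := Sum.inr (Sum.inl ρ)
def vv (ρ : P c) (r : Fin c) : V c := Sum.inr (Sum.inr (ρ, r))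

def seg (ρ : P c) (a b : ℕ) : List (V c) :=
  (((List.finRange c).drop a).take (b - a)).map (fun i => xx (ρ i))

theorem mem_seg {ρ : P c} {a b : ℕ} {w : V c} :
    w ∈ seg ρ a b ↔ ∃ i : Fin c, a ≤ (i : ℕ) ∧ (i : ℕ) < b ∧ w = xx (ρ i) := by
  unfold seg
  simp only [List.mem_map, List.mem_take_iff_getElem, List.getElem_drop,
    List.getElem_finRange]
  constructor
  · rintro ⟨i, ⟨n, hn, rfl⟩, rfl⟩
    simp only [List.length_drop, List.length_finRange, lt_min_iff] at hn
    refine ⟨_, ?_, ?_, rfl⟩ <;> simp <;> omega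
  · rintro ⟨i, hai, hib, rfl⟩
    have hic : (i : ℕ) < c := i.isLt
    refine ⟨i, ⟨(i : ℕ) - a, ?_, ?_⟩, rfl⟩
    · simp only [List.length_drop, List.length_finRange, lt_min_iff]; omega
    · apply Fin.ext
      simp only [Fin.coe_cast, Fin.val_mk]
      omega

theorem seg_length {ρ : P c} {a b : ℕ} (hab : a ≤ b) (hb : b ≤ c) :
    (seg ρ a b).length = b - a := by
  unfold seg
  simp only [List.length_map, List.length_take, List.length_drop, List.length_finRange]
  omega

theorem seg_sublist (ρ : P c) (a b : ℕ) : (seg ρ a b).Sublist (seg ρ 0 c) := by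
  unfold seg
  apply List.Sublist.map
  have h1 : (((List.finRange c).drop a).take (b - a)).Sublist ((List.finRange c).drop a) :=
    List.take_sublist _ _
  have h2 : ((List.finRange c).drop a).Sublist (List.finRange c) := List.drop_sublist _ _
  have h3 : ((List.finRange c).drop 0).take (c - 0) = List.finRange c := by
    simp [List.take_of_length_le]
  rw [h3]
  exact h1.trans h2

def lA (ρ : P c) : List (V c) := seg ρ 0 c ++ [uu ρ]
def lM (ρ : P c) (r : Fin c) : List (V c) := seg ρ 0 r ++ vv ρ r :: seg ρ r c
def lD (ρ : P c) (r : Fin c) (m : Fin c) : List (V c) :=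
  seg ρ 0 m ++ vv ρ r :: (seg ρ (m+1) r ++ uu ρ :: seg ρ r c)
def lU (ρ : P c) (r : Fin c) (m : Fin c) : List (V c) :=
  seg ρ 0 r ++ uu ρ :: (seg ρ r m ++ vv ρ r :: seg ρ (m+1) c)

section Tau
variable (τ : V c → ℕ) {ρ : P c}

theorem pw_seg (hmono : ∀ i j : Fin c, (i:ℕ) < (j:ℕ) → τ (xx (ρ i)) < τ (xx (ρ j)))
    (a b : ℕ) : (seg ρ a b).Pairwise (fun p q => τ p < τ q) := by
  have hall : (seg ρ 0 c).Pairwise (fun p q => τ p < τ q) := by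
    unfold seg
    rw [List.pairwise_map]
    have h3 : ((List.finRange c).drop 0).take (c - 0) = List.finRange c := by
      simp [List.take_of_length_le]
    rw [h3]
    have := List.pairwise_lt_finRange c
    exact this.imp (fun h => hmono _ _ h)
  exact hall.sublist (seg_sublist ρ a b)

theorem sandwich {l₁ l₂ : List (V c)} {m : V c}
    (h₁ : l₁.Pairwise (fun p q => τ p < τ q)) (h₂ : l₂.Pairwise (fun p q => τ p < τ q))
    (ha : ∀ a ∈ l₁, τ a < τ m) (hb : ∀ b ∈ l₂, τ m < τ b) :
    (l₁ ++ m :: l₂).Pairwise (fun p q => τ p < τ q) := by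
  rw [List.pairwise_append]
  refine ⟨h₁, ?_, ?_⟩
  · rw [List.pairwise_cons]; exact ⟨hb, h₂⟩
  · intro a ha' b hb'
    rcases List.mem_cons.mp hb' with rfl | hb''
    · exact ha a ha'
    · exact (ha a ha').trans (hb b hb'')

end Tau

/-! ### leaf-specific pairwise lemmas -/

section PW
variable (τ : V c → ℕ) {ρ : P c}

theorem pw_lA (hmono : ∀ i j : Fin c, (i:ℕ) < (j:ℕ) → τ (xx (ρ i)) < τ (xx (ρ j))) (hu1 : ∀ i : Fin c, τ (xx (ρ i)) < τ (uu ρ)) :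
    (lA ρ).Pairwise (fun p q => τ p < τ q) := by
  have : lA ρ = seg ρ 0 c ++ uu ρ :: [] := rfl
  rw [this]
  apply sandwich τ (pw_seg τ hmono 0 c) (List.Pairwise.nil)
  · intro a ha
    obtain ⟨i, -, -, rfl⟩ := mem_seg.mp ha
    exact hu1 i
  · simp

theorem pw_lM (hmono : ∀ i j : Fin c, (i:ℕ) < (j:ℕ) → τ (xx (ρ i)) < τ (xx (ρ j))) (r : Fin c)
    (hv1 : ∀ i : Fin c, (i:ℕ) < r → τ (xx (ρ i)) < τ (vv ρ r))
    (hv2 : ∀ i : Fin c, (r:ℕ) ≤ i → τ (vv ρ r) < τ (xx (ρ i))) :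
    (lM ρ r).Pairwise (fun p q => τ p < τ q) := by
  unfold lM
  apply sandwich τ (pw_seg τ hmono 0 r) (pw_seg τ hmono r c)
  · intro a ha
    obtain ⟨i, -, hi, rfl⟩ := mem_seg.mp ha
    exact hv1 i hi
  · intro b hb
    obtain ⟨i, hi, -, rfl⟩ := mem_seg.mp hb
    exact hv2 i hi

theorem pw_lD (hmono : ∀ i j : Fin c, (i:ℕ) < (j:ℕ) → τ (xx (ρ i)) < τ (xx (ρ j))) (r m : Fin c) (hmr : (m:ℕ) < r)
    (hu1 : ∀ i : Fin c, (i:ℕ) < r → τ (xx (ρ i)) < τ (uu ρ))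
    (hu2 : ∀ i : Fin c, (r:ℕ) ≤ i → τ (uu ρ) < τ (xx (ρ i)))
    (hv1 : ∀ i : Fin c, (i:ℕ) < m → τ (xx (ρ i)) < τ (vv ρ r))
    (hv2 : ∀ i : Fin c, (m:ℕ)+1 ≤ i → τ (vv ρ r) < τ (xx (ρ i)))
    (hvu : τ (vv ρ r) < τ (uu ρ)) :
    (lD ρ r m).Pairwise (fun p q => τ p < τ q) := by
  unfold lD
  have hinner : (seg ρ (m+1) r ++ uu ρ :: seg ρ r c).Pairwise (fun p q => τ p < τ q) := by
    apply sandwich τ (pw_seg τ hmono _ _) (pw_seg τ hmono _ _)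
    · intro a ha
      obtain ⟨i, -, hi, rfl⟩ := mem_seg.mp ha
      exact hu1 i hi
    · intro b hb
      obtain ⟨i, hi, -, rfl⟩ := mem_seg.mp hb
      exact hu2 i hi
  apply sandwich τ (pw_seg τ hmono _ _) hinner
  · intro a ha
    obtain ⟨i, -, hi, rfl⟩ := mem_seg.mp ha
    exact hv1 i hi
  · intro b hb
    rcases List.mem_append.mp hb with hb' | hb'
    · obtain ⟨i, hi, -, rfl⟩ := mem_seg.mp hb'
      exact hv2 i hi
    · rcases List.mem_cons.mp hb' with rfl | hb''
      · exact hvu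
      · obtain ⟨i, hi, -, rfl⟩ := mem_seg.mp hb''
        exact hv2 i (by omega)

theorem pw_lU (hmono : ∀ i j : Fin c, (i:ℕ) < (j:ℕ) → τ (xx (ρ i)) < τ (xx (ρ j))) (r m : Fin c) (hrm : (r:ℕ) ≤ m)
    (hu1 : ∀ i : Fin c, (i:ℕ) < r → τ (xx (ρ i)) < τ (uu ρ))
    (hu2 : ∀ i : Fin c, (r:ℕ) ≤ i → τ (uu ρ) < τ (xx (ρ i)))
    (hv1 : ∀ i : Fin c, (i:ℕ) < m → τ (xx (ρ i)) < τ (vv ρ r))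
    (hv2 : ∀ i : Fin c, (m:ℕ)+1 ≤ i → τ (vv ρ r) < τ (xx (ρ i)))
    (huv : τ (uu ρ) < τ (vv ρ r)) :
    (lU ρ r m).Pairwise (fun p q => τ p < τ q) := by
  unfold lU
  have hinner : (seg ρ r m ++ vv ρ r :: seg ρ (m+1) c).Pairwise (fun p q => τ p < τ q) := by
    apply sandwich τ (pw_seg τ hmono _ _) (pw_seg τ hmono _ _)
    · intro a ha
      obtain ⟨i, -, hi, rfl⟩ := mem_seg.mp ha
      exact hv1 i hi
    · intro b hb
      obtain ⟨i, hi, -, rfl⟩ := mem_seg.mp hb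
      exact hv2 i hi
  apply sandwich τ (pw_seg τ hmono _ _) hinner
  · intro a ha
    obtain ⟨i, -, hi, rfl⟩ := mem_seg.mp ha
    exact hu1 i hi
  · intro b hb
    rcases List.mem_append.mp hb with hb' | hb'
    · obtain ⟨i, hi, -, rfl⟩ := mem_seg.mp hb'
      exact hu2 i hi
    · rcases List.mem_cons.mp hb' with rfl | hb''
      · exact huv
      · obtain ⟨i, hi, -, rfl⟩ := mem_seg.mp hb''
        exact hu2 i (by omega)

end PW

/-! ### regions -/

theorem card_filter_lt {t : ℕ} (ht : t ≤ c) :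
    (Finset.univ.filter fun j : Fin c => (j:ℕ) < t).card = t := by
  have h : ∀ m ∈ Finset.range t, m < c := fun m hm =>
    lt_of_lt_of_le (Finset.mem_range.mp hm) ht
  have he : (Finset.univ.filter fun j : Fin c => (j:ℕ) < t) = (Finset.range t).attachFin h := by
    ext j
    simp [Finset.mem_attachFin]
  rw [he, Finset.card_attachFin, Finset.card_range]

def reg (F : Fin c → ℕ) (t : ℕ) : ℕ := (Finset.univ.filter fun i => F i < t).card

theorem reg_le (F : Fin c → ℕ) (t : ℕ) : reg F t ≤ c := by
  refine le_trans (Finset.card_filter_le _ _) (by simp)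

theorem reg_spec {F : Fin c → ℕ} (hF : ∀ i j : Fin c, (i:ℕ) < (j:ℕ) → F i < F j) {t : ℕ}
    (ht : ∀ i, F i ≠ t) (i : Fin c) : ((i:ℕ) < reg F t ↔ F i < t) := by
  constructor
  · intro h
    by_contra hnot
    have hti : t < F i := by
      rcases Nat.lt_trichotomy (F i) t with h' | h' | h'
      · exact absurd h' hnot
      · exact absurd h' (ht i)
      · exact h'
    have hsub : (Finset.univ.filter fun j => F j < t) ⊆
        Finset.univ.filter fun j : Fin c => (j:ℕ) < (i:ℕ) := by
      intro j hj
      simp only [Finset.mem_filter, Finset.mem_univ, true_and] at hj ⊢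
      by_contra hji
      push_neg at hji
      have hij : F i ≤ F j := by
        rcases Nat.eq_or_lt_of_le hji with he | hl
        · have hij : i = j := Fin.ext he
          exact le_of_eq (congrArg F hij)
        · exact le_of_lt (hF i j hl)
      omega
    have hc2 := Finset.card_le_card hsub
    rw [card_filter_lt (le_of_lt i.isLt)] at hc2
    unfold reg at h
    omega
  · intro h
    have hsub : (Finset.univ.filter fun j : Fin c => (j:ℕ) < (i:ℕ)+1) ⊆
        Finset.univ.filter fun j => F j < t := by
      intro j hj
      simp only [Finset.mem_filter, Finset.mem_univ, true_and] at hj ⊢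
      have hji : (j:ℕ) ≤ (i:ℕ) := by omega
      rcases Nat.eq_or_lt_of_le hji with he | hl
      · have : j = i := Fin.ext he
        rw [this]; exact h
      · exact lt_trans (hF j i hl) h
    have hc2 := Finset.card_le_card hsub
    rw [card_filter_lt (by omega : (i:ℕ)+1 ≤ c)] at hc2
    unfold reg
    omega

/-! ### index kinds and validity -/

abbrev K (c : ℕ) := Option (Fin c × Option (Fin c))

def lf (ρ : P c) : K c → List (V c)
  | none => lA ρ
  | some (r, none) => lM ρ r
  | some (r, some m) => if (m : ℕ) < r then lD ρ r m else lU ρ r m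

@[simp] theorem lf_A (ρ : P c) : lf ρ none = lA ρ := rfl
@[simp] theorem lf_M (ρ : P c) (r : Fin c) : lf ρ (some (r, none)) = lM ρ r := rfl
@[simp] theorem lf_DU (ρ : P c) (r m : Fin c) :
    lf ρ (some (r, some m)) = if (m : ℕ) < r then lD ρ r m else lU ρ r m := rfl

def validM (c : ℕ) (r : Fin c) : Prop := (r : ℕ) % 2 = 0 ∨ (c - r) % 2 = 0
def validDU (c : ℕ) (r m : Fin c) : Prop :=
  ((m : ℕ) < r ∧ (m : ℕ) % 2 = 0) ∨ ((r : ℕ) ≤ m ∧ (m : ℕ) % 2 = (c - 1) % 2)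

instance : DecidablePred (fun r => validM c r) := fun _ => by unfold validM; infer_instance
instance (r : Fin c) : DecidablePred (fun m => validDU c r m) := fun _ => by
  unfold validDU; infer_instance

def K₀ (c : ℕ) : Finset (K c) :=
  insert none <|
    (Finset.univ.biUnion fun r : Fin c =>
      ((if validM c r then {(r, (none : Option (Fin c)))} else ∅) ∪
        (Finset.univ.filter (validDU c r)).image fun m => (r, some m))).image some

theorem none_mem_K₀ : (none : K c) ∈ K₀ c := Finset.mem_insert_self _ _

theorem M_mem_K₀ {r : Fin c} (h : validM c r) : (some (r, none) : K c) ∈ K₀ c := by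
  unfold K₀
  apply Finset.mem_insert_of_mem
  apply Finset.mem_image_of_mem
  apply Finset.mem_biUnion.mpr
  exact ⟨r, Finset.mem_univ r, by rw [if_pos h]; simp⟩

theorem DU_mem_K₀ {r m : Fin c} (h : validDU c r m) : (some (r, some m) : K c) ∈ K₀ c := by
  unfold K₀
  apply Finset.mem_insert_of_mem
  apply Finset.mem_image_of_mem
  apply Finset.mem_biUnion.mpr
  refine ⟨r, Finset.mem_univ r, Finset.mem_union_right _ ?_⟩
  exact Finset.mem_image_of_mem _ (Finset.mem_filter.mpr ⟨Finset.mem_univ m, h⟩)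

/-! ### coverage -/

theorem coverage (τ : V c → ℕ) (hτ : Function.Injective τ) :
    ∃ ρ : P c, ∃ κ ∈ K₀ c, (lf ρ κ).Pairwise (fun p q => τ p < τ q) := by
  classical
  set f : Fin c → ℕ := fun i => τ (xx i) with hf
  set ρ : P c := Tuple.sort f with hρ
  have hmono' : Monotone (f ∘ ρ) := Tuple.monotone_sort f
  have hfinj : Function.Injective f := fun a b hab => Sum.inl_injective (hτ hab)
  have hinj : Function.Injective (f ∘ ρ) := hfinj.comp ρ.injective
  have hstrict : StrictMono (f ∘ ρ) := hmono'.strictMono_of_injective hinj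
  set F : Fin c → ℕ := fun i => τ (xx (ρ i)) with hF
  have hFm : ∀ i j : Fin c, (i:ℕ) < (j:ℕ) → F i < F j := by
    intro i j h
    exact hstrict (show i < j from h)
  have hune : ∀ i, F i ≠ τ (uu ρ) := by
    intro i h
    exact absurd (hτ h) (by simp [xx, uu])
  set rr := reg F (τ (uu ρ)) with hrr
  have hrc : rr ≤ c := reg_le _ _
  have hu1 : ∀ i : Fin c, (i:ℕ) < rr → F i < τ (uu ρ) := fun i h => (reg_spec hFm hune i).mp h
  have hu2 : ∀ i : Fin c, rr ≤ (i:ℕ) → τ (uu ρ) < F i := by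
    intro i h
    have h1 : ¬ F i < τ (uu ρ) := fun hlt => by
      have := (reg_spec hFm hune i).mpr hlt; omega
    rcases Nat.lt_trichotomy (F i) (τ (uu ρ)) with h' | h' | h'
    · exact absurd h' h1
    · exact absurd h' (hune i)
    · exact h'
  by_cases hr : rr = c
  · refine ⟨ρ, none, none_mem_K₀, ?_⟩
    show (lA ρ).Pairwise _
    exact pw_lA τ hFm (fun i => hu1 i (by omega))
  · have hrlt : rr < c := lt_of_le_of_ne hrc hr
    set r : Fin c := ⟨rr, hrlt⟩ with hrdef
    have hrval : (r : ℕ) = rr := rfl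
    have hvne : ∀ i, F i ≠ τ (vv ρ r) := by
      intro i h
      exact absurd (hτ h) (by simp [xx, vv])
    set gg := reg F (τ (vv ρ r)) with hgg
    have hgc : gg ≤ c := reg_le _ _
    have hv1 : ∀ i : Fin c, (i:ℕ) < gg → F i < τ (vv ρ r) := fun i h => (reg_spec hFm hvne i).mp h
    have hv2 : ∀ i : Fin c, gg ≤ (i:ℕ) → τ (vv ρ r) < F i := by
      intro i h
      have h1 : ¬ F i < τ (vv ρ r) := fun hlt => by
        have := (reg_spec hFm hvne i).mpr hlt; omega
      rcases Nat.lt_trichotomy (F i) (τ (vv ρ r)) with h' | h' | h'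
      · exact absurd h' h1
      · exact absurd h' (hvne i)
      · exact h'
    rcases Nat.lt_trichotomy gg rr with hlt | heq | hgt
    · set s : ℕ := if gg % 2 = 0 then gg else gg - 1 with hs
      have hs2 : s % 2 = 0 := by rw [hs]; split <;> omega
      have hsr : s < rr := by rw [hs]; split <;> omega
      have hsg1 : s ≤ gg := by rw [hs]; split <;> omega
      have hsg2 : gg ≤ s + 1 := by rw [hs]; split <;> omega
      set m : Fin c := ⟨s, by omega⟩ with hm
      have hmval : (m : ℕ) = s := rfl
      have hvu : τ (vv ρ r) < τ (uu ρ) := by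
        have h1 : τ (vv ρ r) < F ⟨gg, by omega⟩ := hv2 _ (by simp)
        have h2 : F ⟨gg, by omega⟩ < τ (uu ρ) := hu1 _ (by simpa using hlt)
        omega
      refine ⟨ρ, some (r, some m), DU_mem_K₀ (Or.inl ⟨by omega, by omega⟩), ?_⟩
      show (lf ρ (some (r, some m))).Pairwise _
      rw [lf_DU, if_pos (by omega : (m:ℕ) < (r:ℕ))]
      refine pw_lD τ hFm r m (by omega)
        (fun i hi => hu1 i (by omega)) (fun i hi => hu2 i (by omega))
        (fun i hi => hv1 i (by omega))
        (fun i hi => hv2 i (by omega)) hvu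
    · have hne : τ (vv ρ r) ≠ τ (uu ρ) := fun h => absurd (hτ h) (by simp [vv, uu])
      rcases Nat.lt_or_ge (τ (vv ρ r)) (τ (uu ρ)) with hvu | huv'
      · by_cases hrp : rr % 2 = 0
        · refine ⟨ρ, some (r, none), M_mem_K₀ (Or.inl (by omega)), ?_⟩
          show (lM ρ r).Pairwise _
          exact pw_lM τ hFm r (fun i hi => hv1 i (by omega))
            (fun i hi => hv2 i (by omega))
        · have hrr1 : 1 ≤ rr := by omega
          set m : Fin c := ⟨rr - 1, by omega⟩ with hm
          have hmval : (m : ℕ) = rr - 1 := rfl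
          refine ⟨ρ, some (r, some m), DU_mem_K₀ (Or.inl ⟨by omega, by omega⟩), ?_⟩
          show (lf ρ (some (r, some m))).Pairwise _
          rw [lf_DU, if_pos (by omega : (m:ℕ) < (r:ℕ))]
          refine pw_lD τ hFm r m (by omega)
            (fun i hi => hu1 i (by omega)) (fun i hi => hu2 i (by omega))
            (fun i hi => hv1 i (by omega))
            (fun i hi => hv2 i (by omega)) hvu
      · have huv : τ (uu ρ) < τ (vv ρ r) := by
          rcases Nat.eq_or_lt_of_le huv' with h' | h'
          · exact absurd h'.symm hne
          · exact h'
        by_cases hcp : (c - rr) % 2 = 0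
        · refine ⟨ρ, some (r, none), M_mem_K₀ (Or.inr (by omega)), ?_⟩
          show (lM ρ r).Pairwise _
          exact pw_lM τ hFm r (fun i hi => hv1 i (by omega))
            (fun i hi => hv2 i (by omega))
        · refine ⟨ρ, some (r, some r), DU_mem_K₀ (Or.inr ⟨le_refl _, by omega⟩), ?_⟩
          show (lf ρ (some (r, some r))).Pairwise _
          rw [lf_DU, if_neg (by omega)]
          refine pw_lU τ hFm r r (le_refl _)
            (fun i hi => hu1 i (by omega)) (fun i hi => hu2 i (by omega))
            (fun i hi => hv1 i (by omega))
            (fun i hi => hv2 i (by omega)) huv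
    · set d : ℕ := if gg % 2 = (c-1) % 2 then gg else gg - 1 with hd
      have hdpar : d % 2 = (c-1) % 2 := by
        rw [hd]; split
        · assumption
        · rename_i hne2
          rcases Nat.eq_or_lt_of_le hgc with he | hl <;> omega
      have hdc : d < c := by
        rw [hd]; split
        · rename_i hp
          rcases Nat.eq_or_lt_of_le hgc with he | hl
          · exfalso; omega
          · exact hl
        · omega
      have hrd : rr ≤ d := by rw [hd]; split <;> omega
      have hdg1 : d ≤ gg := by rw [hd]; split <;> omega
      have hdg2 : gg ≤ d + 1 := by rw [hd]; split <;> omega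
      set m : Fin c := ⟨d, hdc⟩ with hm
      have hmval : (m : ℕ) = d := rfl
      have huv : τ (uu ρ) < τ (vv ρ r) := by
        have h1 : τ (uu ρ) < F ⟨rr, hrlt⟩ := hu2 _ (by simp)
        have h2 : F ⟨rr, hrlt⟩ < τ (vv ρ r) := hv1 _ (by simpa using hgt)
        omega
      refine ⟨ρ, some (r, some m), DU_mem_K₀ (Or.inr ⟨by omega, by omega⟩), ?_⟩
      show (lf ρ (some (r, some m))).Pairwise _
      rw [lf_DU, if_neg (by omega)]
      refine pw_lU τ hFm r m (by omega)
        (fun i hi => hu1 i (by omega)) (fun i hi => hu2 i (by omega))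
        (fun i hi => hv1 i (by omega))
        (fun i hi => hv2 i (by omega)) huv


/-! ### membership characterizations -/

theorem mem_lA {ρ : P c} {w : V c} :
    w ∈ lA ρ ↔ (∃ i, w = xx (ρ i)) ∨ w = uu ρ := by
  unfold lA
  simp only [List.mem_append, List.mem_singleton, mem_seg]
  constructor
  · rintro (⟨i, -, -, rfl⟩ | rfl)
    · exact Or.inl ⟨i, rfl⟩
    · exact Or.inr rfl
  · rintro (⟨i, rfl⟩ | rfl)
    · exact Or.inl ⟨i, by omega, i.isLt, rfl⟩
    · exact Or.inr rfl

theorem mem_lM {ρ : P c} {r : Fin c} {w : V c} :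
    w ∈ lM ρ r ↔ (∃ i, w = xx (ρ i)) ∨ w = vv ρ r := by
  unfold lM
  simp only [List.mem_append, List.mem_cons, mem_seg]
  constructor
  · rintro (⟨i, -, -, rfl⟩ | rfl | ⟨i, -, -, rfl⟩)
    · exact Or.inl ⟨i, rfl⟩
    · exact Or.inr rfl
    · exact Or.inl ⟨i, rfl⟩
  · rintro (⟨i, rfl⟩ | rfl)
    · rcases Nat.lt_or_ge (i : ℕ) (r : ℕ) with h | h
      · exact Or.inl ⟨i, by omega, h, rfl⟩
      · exact Or.inr (Or.inr ⟨i, h, i.isLt, rfl⟩)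
    · exact Or.inr (Or.inl rfl)

theorem mem_lD {ρ : P c} {r m : Fin c} (hmr : (m:ℕ) < r) {w : V c} :
    w ∈ lD ρ r m ↔ (∃ i, i ≠ m ∧ w = xx (ρ i)) ∨ w = uu ρ ∨ w = vv ρ r := by
  unfold lD
  simp only [List.mem_append, List.mem_cons, mem_seg]
  constructor
  · rintro (⟨i, -, hi, rfl⟩ | rfl | ⟨i, hi, -, rfl⟩ | rfl | ⟨i, hi, -, rfl⟩)
    · exact Or.inl ⟨i, fun he => by subst he; omega, rfl⟩
    · exact Or.inr (Or.inr rfl)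
    · exact Or.inl ⟨i, fun he => by subst he; omega, rfl⟩
    · exact Or.inr (Or.inl rfl)
    · exact Or.inl ⟨i, fun he => by subst he; omega, rfl⟩
  · rintro (⟨i, hne, rfl⟩ | rfl | rfl)
    · have hv : (i:ℕ) ≠ (m:ℕ) := fun he => hne (Fin.ext he)
      rcases Nat.lt_trichotomy (i:ℕ) (m:ℕ) with h | h | h
      · exact Or.inl ⟨i, by omega, by omega, rfl⟩
      · omega
      · rcases Nat.lt_or_ge (i:ℕ) (r:ℕ) with h2 | h2
        · exact Or.inr (Or.inr (Or.inl ⟨i, by omega, by omega, rfl⟩))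
        · exact Or.inr (Or.inr (Or.inr (Or.inr ⟨i, h2, i.isLt, rfl⟩)))
    · exact Or.inr (Or.inr (Or.inr (Or.inl rfl)))
    · exact Or.inr (Or.inl rfl)

theorem mem_lU {ρ : P c} {r m : Fin c} (hrm : (r:ℕ) ≤ m) {w : V c} :
    w ∈ lU ρ r m ↔ (∃ i, i ≠ m ∧ w = xx (ρ i)) ∨ w = uu ρ ∨ w = vv ρ r := by
  unfold lU
  simp only [List.mem_append, List.mem_cons, mem_seg]
  constructor
  · rintro (⟨i, -, hi, rfl⟩ | rfl | ⟨i, hi, hi2, rfl⟩ | rfl | ⟨i, hi, -, rfl⟩)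
    · exact Or.inl ⟨i, fun he => by subst he; omega, rfl⟩
    · exact Or.inr (Or.inl rfl)
    · exact Or.inl ⟨i, fun he => by subst he; omega, rfl⟩
    · exact Or.inr (Or.inr rfl)
    · exact Or.inl ⟨i, fun he => by subst he; omega, rfl⟩
  · rintro (⟨i, hne, rfl⟩ | rfl | rfl)
    · have hv : (i:ℕ) ≠ (m:ℕ) := fun he => hne (Fin.ext he)
      rcases Nat.lt_or_ge (i:ℕ) (r:ℕ) with h | h
      · exact Or.inl ⟨i, by omega, h, rfl⟩
      · rcases Nat.lt_trichotomy (i:ℕ) (m:ℕ) with h2 | h2 | h2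
        · exact Or.inr (Or.inr (Or.inl ⟨i, h, h2, rfl⟩))
        · omega
        · exact Or.inr (Or.inr (Or.inr (Or.inr ⟨i, by omega, i.isLt, rfl⟩)))
    · exact Or.inr (Or.inl rfl)
    · exact Or.inr (Or.inr (Or.inr (Or.inl rfl)))

theorem mem_lf_DU {ρ : P c} {r m : Fin c} {w : V c} :
    w ∈ lf ρ (some (r, some m)) ↔
      (∃ i, i ≠ m ∧ w = xx (ρ i)) ∨ w = uu ρ ∨ w = vv ρ r := by
  rw [lf_DU]
  split
  · exact mem_lD (by assumption)
  · exact mem_lU (by omega)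

/-! ### injectivity of the index → member-set map -/

theorem lf_same_mem {ρ₁ ρ₂ : P c} {κ₁ κ₂ : K c}
    (h : ∀ w, w ∈ lf ρ₁ κ₁ ↔ w ∈ lf ρ₂ κ₂) : ρ₁ = ρ₂ ∧ κ₁ = κ₂ := by
  rcases κ₁ with _ | ⟨r₁, _ | m₁⟩ <;> rcases κ₂ with _ | ⟨r₂, _ | m₂⟩
  · -- A A
    have h1 : uu ρ₁ ∈ lf ρ₂ (none : K c) := (h _).mp (by rw [lf_A, mem_lA]; right; rfl)
    rw [lf_A, mem_lA] at h1
    rcases h1 with ⟨i, hi⟩ | hu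
    · exact absurd hi (by simp [uu, xx])
    · exact ⟨Sum.inl_injective (Sum.inr_injective (by exact hu)), rfl⟩
  · -- A M
    have h1 : vv ρ₂ r₂ ∈ lf ρ₁ (none : K c) := (h _).mpr (by rw [lf_M, mem_lM]; right; rfl)
    rw [lf_A, mem_lA] at h1
    rcases h1 with ⟨i, hi⟩ | hu
    · exact absurd hi (by simp [vv, xx])
    · exact absurd hu (by simp [vv, uu])
  · -- A DU
    have h1 : vv ρ₂ r₂ ∈ lf ρ₁ (none : K c) := (h _).mpr (mem_lf_DU.mpr (Or.inr (Or.inr rfl)))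
    rw [lf_A, mem_lA] at h1
    rcases h1 with ⟨i, hi⟩ | hu
    · exact absurd hi (by simp [vv, xx])
    · exact absurd hu (by simp [vv, uu])
  · -- M A
    have h1 : vv ρ₁ r₁ ∈ lf ρ₂ (none : K c) := (h _).mp (by rw [lf_M, mem_lM]; right; rfl)
    rw [lf_A, mem_lA] at h1
    rcases h1 with ⟨i, hi⟩ | hu
    · exact absurd hi (by simp [vv, xx])
    · exact absurd hu (by simp [vv, uu])
  · -- M M
    have h1 : vv ρ₁ r₁ ∈ lf ρ₂ (some (r₂, none)) := (h _).mp (by rw [lf_M, mem_lM]; right; rfl)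
    rw [lf_M, mem_lM] at h1
    rcases h1 with ⟨i, hi⟩ | hu
    · exact absurd hi (by simp [vv, xx])
    · have := Sum.inr_injective (Sum.inr_injective (by exact hu))
      obtain ⟨h2, h3⟩ := Prod.mk.injEq .. ▸ this
      exact ⟨h2, by rw [h3]⟩
  · -- M DU
    have h1 : uu ρ₂ ∈ lf ρ₁ (some (r₁, none)) := (h _).mpr (mem_lf_DU.mpr (Or.inr (Or.inl rfl)))
    rw [lf_M, mem_lM] at h1
    rcases h1 with ⟨i, hi⟩ | hu
    · exact absurd hi (by simp [uu, xx])
    · exact absurd hu (by simp [uu, vv])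
  · -- DU A
    have h1 : vv ρ₁ r₁ ∈ lf ρ₂ (none : K c) := (h _).mp (mem_lf_DU.mpr (Or.inr (Or.inr rfl)))
    rw [lf_A, mem_lA] at h1
    rcases h1 with ⟨i, hi⟩ | hu
    · exact absurd hi (by simp [vv, xx])
    · exact absurd hu (by simp [vv, uu])
  · -- DU M
    have h1 : uu ρ₁ ∈ lf ρ₂ (some (r₂, none)) := (h _).mp (mem_lf_DU.mpr (Or.inr (Or.inl rfl)))
    rw [lf_M, mem_lM] at h1
    rcases h1 with ⟨i, hi⟩ | hu
    · exact absurd hi (by simp [uu, xx])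
    · exact absurd hu (by simp [uu, vv])
  · -- DU DU
    have h1 : vv ρ₁ r₁ ∈ lf ρ₂ (some (r₂, some m₂)) := (h _).mp (mem_lf_DU.mpr (Or.inr (Or.inr rfl)))
    rw [mem_lf_DU] at h1
    rcases h1 with ⟨i, -, hi⟩ | hu | hv
    · exact absurd hi (by simp [vv, xx])
    · exact absurd hu (by simp [vv, uu])
    · have := Sum.inr_injective (Sum.inr_injective (by exact hv))
      obtain ⟨h2, h3⟩ := Prod.mk.injEq .. ▸ this
      subst h2
      subst h3
      -- now show m₁ = m₂
      have hx : xx (ρ₁ m₂) ∈ lf ρ₁ (some (r₁, some m₁)) ↔ xx (ρ₁ m₂) ∈ lf ρ₁ (some (r₁, some m₂)) := h _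
      rw [mem_lf_DU, mem_lf_DU] at hx
      have hr : ¬ ((∃ i, i ≠ m₂ ∧ xx (ρ₁ m₂) = xx (ρ₁ i)) ∨ xx (ρ₁ m₂) = uu ρ₁ ∨ xx (ρ₁ m₂) = vv ρ₁ r₁) := by
        rintro (⟨i, hne, hi⟩ | hu | hv2)
        · exact hne (ρ₁.injective (Sum.inl_injective hi)).symm
        · exact absurd hu (by simp [xx, uu])
        · exact absurd hv2 (by simp [xx, vv])
      have hl : ¬ ((∃ i, i ≠ m₁ ∧ xx (ρ₁ m₂) = xx (ρ₁ i)) ∨ xx (ρ₁ m₂) = uu ρ₁ ∨ xx (ρ₁ m₂) = vv ρ₁ r₁) :=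
        fun hmem => hr (hx.mp hmem)
      by_contra hne
      have hne2 : m₁ ≠ m₂ := fun he => hne (by rw [he]; exact ⟨rfl, rfl⟩)
      exact hl (Or.inl ⟨m₂, fun he => hne2 he.symm, rfl⟩)


/-! ### nodup via a witness valuation -/

def wit (ρ : P c) (κ : K c) : V c → ℕ
  | Sum.inl i => 10 * (ρ.symm i : ℕ) + 10
  | Sum.inr (Sum.inl _) =>
      match κ with
      | none => 10 * c + 5
      | some (r, _) => 10 * (r : ℕ) + 5
  | Sum.inr (Sum.inr _) =>
      match κ with
      | none => 0
      | some (r, none) => 10 * (r : ℕ) + 5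
      | some (r, some m) => if (m : ℕ) < r then 10 * (m : ℕ) + 12 else 10 * (m : ℕ) + 18

theorem wit_xx (ρ : P c) (κ : K c) (i : Fin c) :
    wit ρ κ (xx (ρ i)) = 10 * (i : ℕ) + 10 := by
  show 10 * (ρ.symm (ρ i) : ℕ) + 10 = _
  rw [Equiv.symm_apply_apply]

theorem wit_mono (ρ : P c) (κ : K c) :
    ∀ i j : Fin c, (i:ℕ) < (j:ℕ) → wit ρ κ (xx (ρ i)) < wit ρ κ (xx (ρ j)) := by
  intro i j hij
  rw [wit_xx, wit_xx]
  omega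

theorem nodup_lf (ρ : P c) (κ : K c) : (lf ρ κ).Nodup := by
  have key : (lf ρ κ).Pairwise (fun p q => wit ρ κ p < wit ρ κ q) := by
    rcases κ with _ | ⟨r, _ | m⟩
    · rw [lf_A]
      apply pw_lA _ (wit_mono ρ none)
      intro i
      rw [wit_xx]
      show _ < 10 * c + 5
      have := i.isLt
      omega
    · rw [lf_M]
      refine pw_lM _ (wit_mono ρ _) r ?_ ?_
      · intro i hi
        rw [wit_xx]
        show _ < 10 * (r:ℕ) + 5
        omega
      · intro i hi
        rw [wit_xx]
        show 10 * (r:ℕ) + 5 < _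
        omega
    · rw [lf_DU]
      split
      · rename_i hmr
        refine pw_lD _ (wit_mono ρ _) r m hmr ?_ ?_ ?_ ?_ ?_
        · intro i hi; rw [wit_xx]; show _ < 10 * (r:ℕ) + 5; omega
        · intro i hi; rw [wit_xx]; show 10 * (r:ℕ) + 5 < _; omega
        · intro i hi; rw [wit_xx]
          show _ < (if (m : ℕ) < r then 10 * (m : ℕ) + 12 else 10 * (m : ℕ) + 18)
          rw [if_pos hmr]; omega
        · intro i hi; rw [wit_xx]
          show (if (m : ℕ) < r then 10 * (m : ℕ) + 12 else 10 * (m : ℕ) + 18) < _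
          rw [if_pos hmr]; omega
        · show (if (m : ℕ) < r then 10 * (m : ℕ) + 12 else 10 * (m : ℕ) + 18) < 10 * (r:ℕ) + 5
          rw [if_pos hmr]; omega
      · rename_i hmr
        have hrm : (r:ℕ) ≤ m := by omega
        refine pw_lU _ (wit_mono ρ _) r m hrm ?_ ?_ ?_ ?_ ?_
        · intro i hi; rw [wit_xx]; show _ < 10 * (r:ℕ) + 5; omega
        · intro i hi; rw [wit_xx]; show 10 * (r:ℕ) + 5 < _; omega
        · intro i hi; rw [wit_xx]
          show _ < (if (m : ℕ) < r then 10 * (m : ℕ) + 12 else 10 * (m : ℕ) + 18)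
          rw [if_neg hmr]; omega
        · intro i hi; rw [wit_xx]
          show (if (m : ℕ) < r then 10 * (m : ℕ) + 12 else 10 * (m : ℕ) + 18) < _
          rw [if_neg hmr]; omega
        · show 10 * (r:ℕ) + 5 < (if (m : ℕ) < r then 10 * (m : ℕ) + 12 else 10 * (m : ℕ) + 18)
          rw [if_neg hmr]; omega
  have key2 : (lf ρ κ).Pairwise (· ≠ ·) := by
    refine key.imp ?_
    intro a b hab he
    rw [he] at hab
    exact Nat.lt_irrefl _ hab
  exact key2

/-! ### lengths -/

theorem length_lf (ρ : P c) (κ : K c) : (lf ρ κ).length = c + 1 := by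
  rcases κ with _ | ⟨r, _ | m⟩
  · rw [lf_A]
    unfold lA
    rw [List.length_append, seg_length (by omega) (le_refl c)]
    simp
  · rw [lf_M]
    unfold lM
    rw [List.length_append, List.length_cons, seg_length (by omega) (by omega),
      seg_length (le_of_lt r.isLt) (le_refl c)]
    have := r.isLt
    omega
  · rw [lf_DU]
    split
    · rename_i hmr
      unfold lD
      have hr := r.isLt
      have hm := m.isLt
      rw [List.length_append, List.length_cons, List.length_append, List.length_cons,
        seg_length (by omega) (by omega), seg_length (by omega) (by omega),
        seg_length (by omega) (by omega)]
      omega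
    · rename_i hmr
      unfold lU
      have hr := r.isLt
      have hm := m.isLt
      rw [List.length_append, List.length_cons, List.length_append, List.length_cons,
        seg_length (by omega) (by omega), seg_length (by omega) (by omega),
        seg_length (by omega) (by omega)]
      omega


/-! ### cardinality of K₀ -/

theorem card_even_range (n : ℕ) :
    ((Finset.range n).filter (fun m => m % 2 = 0)).card = (n+1)/2 := by
  induction n with
  | zero => simp
  | succ n ih =>
    rw [Finset.range_add_one, Finset.filter_insert]
    split
    · rename_i h
      rw [Finset.card_insert_of_notMem (by simp), ih]
      omega
    · rename_i h
      rw [ih]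
      omega

theorem card_filter_lt_even {t : ℕ} (ht : t ≤ c) :
    (Finset.univ.filter fun m : Fin c => (m:ℕ) < t ∧ (m:ℕ) % 2 = 0).card = (t+1)/2 := by
  have h : ∀ x ∈ (Finset.range t).filter (fun m => m % 2 = 0), x < c := by
    intro x hx
    simp only [Finset.mem_filter, Finset.mem_range] at hx
    omega
  have he : (Finset.univ.filter fun m : Fin c => (m:ℕ) < t ∧ (m:ℕ) % 2 = 0)
      = ((Finset.range t).filter (fun m => m % 2 = 0)).attachFin h := by
    ext j
    simp [Finset.mem_attachFin, Finset.mem_filter, Finset.mem_range]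
  rw [he, Finset.card_attachFin, card_even_range]

theorem card_filter_ge_par {t : ℕ} (ht : t ≤ c) :
    (Finset.univ.filter fun m : Fin c => t ≤ (m:ℕ) ∧ (m:ℕ) % 2 = (c-1) % 2).card
      = (c - t + 1)/2 := by
  have h : ∀ x ∈ (Finset.range c).filter (fun m => t ≤ m ∧ m % 2 = (c-1) % 2), x < c := by
    intro x hx
    simp only [Finset.mem_filter, Finset.mem_range] at hx
    omega
  have he : (Finset.univ.filter fun m : Fin c => t ≤ (m:ℕ) ∧ (m:ℕ) % 2 = (c-1) % 2)
      = ((Finset.range c).filter (fun m => t ≤ m ∧ m % 2 = (c-1) % 2)).attachFin h := by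
    ext j
    simp only [Finset.mem_filter, Finset.mem_univ, true_and, Finset.mem_attachFin,
      Finset.mem_range]
    have := j.isLt
    constructor
    · rintro ⟨h1, h2⟩; exact ⟨this, h1, h2⟩
    · rintro ⟨-, h1, h2⟩; exact ⟨h1, h2⟩
  rw [he, Finset.card_attachFin]
  have hbij : ((Finset.range c).filter (fun m => t ≤ m ∧ m % 2 = (c-1) % 2)).card
      = ((Finset.range (c - t)).filter (fun m => m % 2 = 0)).card := by
    apply Finset.card_nbij' (fun m => c - 1 - m) (fun j => c - 1 - j)
    · intro a ha
      simp only [Finset.mem_coe, Finset.mem_filter, Finset.mem_range] at ha ⊢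
      omega
    · intro a ha
      simp only [Finset.mem_coe, Finset.mem_filter, Finset.mem_range] at ha ⊢
      omega
    · intro a ha
      simp only [Finset.mem_coe, Finset.mem_filter, Finset.mem_range] at ha
      beta_reduce
      omega
    · intro a ha
      simp only [Finset.mem_coe, Finset.mem_filter, Finset.mem_range] at ha
      beta_reduce
      omega
  rw [hbij, card_even_range]

theorem bucket_fst {r : Fin c} {p : Fin c × Option (Fin c)}
    (hp : p ∈ ((if validM c r then {(r, (none : Option (Fin c)))} else ∅) ∪
        (Finset.univ.filter (validDU c r)).image fun m => (r, some m))) : p.1 = r := by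
  rcases Finset.mem_union.mp hp with h | h
  · split at h
    · simp only [Finset.mem_singleton] at h
      rw [h]
    · simp at h
  · obtain ⟨m, -, rfl⟩ := Finset.mem_image.mp h
    rfl

theorem card_K₀ : (K₀ c).card = 1 + c * ((c+3)/2) := by
  unfold K₀
  rw [Finset.card_insert_of_notMem (by simp)]
  rw [Finset.card_image_of_injective _ (Option.some_injective _)]
  rw [Finset.card_biUnion (fun r₁ _ r₂ _ hne => ?_)]
  swap
  · rw [Function.onFun, Finset.disjoint_left]
    intro p hp₁ hp₂
    exact hne ((bucket_fst hp₁).symm.trans (bucket_fst hp₂))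
  have hb : ∀ r : Fin c, (((if validM c r then {(r, (none : Option (Fin c)))} else ∅) ∪
        (Finset.univ.filter (validDU c r)).image fun m => (r, some m))).card = (c+3)/2 := by
    intro r
    have hrc := r.isLt
    rw [Finset.card_union_of_disjoint ?hd]
    case hd =>
      rw [Finset.disjoint_left]
      intro p hp₁ hp₂
      obtain ⟨m, -, rfl⟩ := Finset.mem_image.mp hp₂
      split at hp₁
      · simp only [Finset.mem_singleton, Prod.mk.injEq] at hp₁
        exact absurd hp₁.2 (by simp)
      · simp at hp₁
    rw [Finset.card_image_of_injective _ (fun a b h => by simpa using h)]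
    have hDU : (Finset.univ.filter (validDU c r)).card = ((r:ℕ)+1)/2 + (c-(r:ℕ)+1)/2 := by
      unfold validDU
      rw [Finset.filter_or, Finset.card_union_of_disjoint ?hd2]
      case hd2 =>
        rw [Finset.disjoint_left]
        intro m hm₁ hm₂
        simp only [Finset.mem_filter, Finset.mem_univ, true_and] at hm₁ hm₂
        omega
      rw [card_filter_lt_even (le_of_lt r.isLt), card_filter_ge_par (le_of_lt r.isLt)]
    rw [hDU]
    split
    · rename_i h
      unfold validM at h
      simp only [Finset.card_singleton]
      rcases h with h | h <;> omega
    · rename_i h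
      unfold validM at h
      push_neg at h
      simp only [Finset.card_empty]
      omega
  rw [Finset.sum_congr rfl (fun r _ => hb r)]
  rw [Finset.sum_const, Finset.card_univ, Fintype.card_fin, smul_eq_mul]
  omega


/-! ### edges as functions, final edge set -/

def edgeOf (hc : 0 < c) (p : P c × K c) : Fin (c+1) → V c :=
  fun j => (lf p.1 p.2).getD (j : ℕ) (xx ⟨0, hc⟩)

theorem edgeOf_get (hc : 0 < c) (p : P c × K c) (j : Fin (c+1)) :
    edgeOf hc p j = (lf p.1 p.2)[(j:ℕ)]'(by rw [length_lf]; exact j.isLt) := by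
  unfold edgeOf
  exact List.getD_eq_getElem _ _ (by rw [length_lf]; exact j.isLt)

theorem range_edgeOf (hc : 0 < c) (p : P c × K c) {w : V c} :
    w ∈ Set.range (edgeOf hc p) ↔ w ∈ lf p.1 p.2 := by
  constructor
  · rintro ⟨j, rfl⟩
    rw [edgeOf_get]
    exact List.getElem_mem _
  · intro hw
    obtain ⟨j, hj, he⟩ := List.getElem_of_mem hw
    have hjlt : j < c + 1 := by rw [length_lf] at hj; exact hj
    refine ⟨⟨j, hjlt⟩, ?_⟩
    rw [edgeOf_get]
    exact he

theorem edgeOf_inj (hc : 0 < c) (p : P c × K c) : Function.Injective (edgeOf hc p) := by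
  intro a b hab
  rw [edgeOf_get, edgeOf_get] at hab
  have hnd := nodup_lf p.1 p.2
  have h := (List.Nodup.getElem_inj_iff hnd).mp hab
  exact Fin.ext h

theorem edgeOf_global_inj (hc : 0 < c) : Function.Injective (edgeOf hc) := by
  intro p₁ p₂ h
  have hmem : ∀ w, w ∈ lf p₁.1 p₁.2 ↔ w ∈ lf p₂.1 p₂.2 := by
    intro w
    rw [← range_edgeOf hc p₁, ← range_edgeOf hc p₂, h]
  obtain ⟨h1, h2⟩ := lf_same_mem hmem
  exact Prod.ext h1 h2

theorem master (c : ℕ) (hc : 0 < c) :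
    ∃ (n : ℕ) (E : Finset (Fin (c+1) → Fin n)),
      (∀ e ∈ E, Function.Injective e) ∧
      (∀ e ∈ E, ∀ f ∈ E, Set.range e = Set.range f → e = f) ∧
      (∀ σ : Fin n → ℕ, Function.Injective σ →
        ∃ e ∈ E, ∀ i j : Fin (c+1), i < j → σ (e i) < σ (e j)) ∧
      E.card = Nat.factorial c * (1 + c * ((c+3)/2)) := by
  classical
  refine ⟨Fintype.card (V c), ?_⟩
  set φ : V c ≃ Fin (Fintype.card (V c)) := Fintype.equivFin (V c) with hφ
  have hcomp_inj : Function.Injective (fun p : P c × K c => (φ ∘ edgeOf hc p)) := by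
    intro p₁ p₂ h
    apply edgeOf_global_inj hc
    funext j
    have := congrFun h j
    exact φ.injective this
  refine ⟨(Finset.univ ×ˢ K₀ c).image (fun p => φ ∘ edgeOf hc p), ?_, ?_, ?_, ?_⟩
  · intro e he
    obtain ⟨p, -, rfl⟩ := Finset.mem_image.mp he
    exact φ.injective.comp (edgeOf_inj hc p)
  · intro e he f hf hr
    obtain ⟨p₁, hp₁, rfl⟩ := Finset.mem_image.mp he
    obtain ⟨p₂, hp₂, rfl⟩ := Finset.mem_image.mp hf
    have h1 : Set.range (edgeOf hc p₁) = Set.range (edgeOf hc p₂) := by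
      rw [Set.range_comp, Set.range_comp] at hr
      exact (Set.image_injective.mpr φ.injective) hr
    have hmem : ∀ w, w ∈ lf p₁.1 p₁.2 ↔ w ∈ lf p₂.1 p₂.2 := by
      intro w
      rw [← range_edgeOf hc p₁, ← range_edgeOf hc p₂, h1]
    obtain ⟨ha, hb⟩ := lf_same_mem hmem
    have : p₁ = p₂ := Prod.ext ha hb
    rw [this]
  · intro σ hσ
    have hτ : Function.Injective (σ ∘ φ) := hσ.comp φ.injective
    obtain ⟨ρ, κ, hκ, hpw⟩ := coverage (σ ∘ φ) hτ
    refine ⟨φ ∘ edgeOf hc (ρ, κ),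
      Finset.mem_image_of_mem _ (Finset.mem_product.mpr ⟨Finset.mem_univ _, hκ⟩), ?_⟩
    intro i j hij
    show σ (φ (edgeOf hc (ρ, κ) i)) < σ (φ (edgeOf hc (ρ, κ) j))
    rw [edgeOf_get, edgeOf_get]
    have := List.pairwise_iff_getElem.mp hpw (i:ℕ) (j:ℕ)
      (by rw [length_lf]; exact i.isLt) (by rw [length_lf]; exact j.isLt) (by exact hij)
    exact this
  · rw [Finset.card_image_of_injective _ hcomp_inj, Finset.card_product, Finset.card_univ,
      card_K₀]
    congr 1
    rw [Fintype.card_perm, Fintype.card_fin]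

end S16


/-- For every integer `k ≥ 3`, there exists an oriented `k`-graph
with Property O having exactly `(⌊k/2⌋ + 1)·k! − ⌊k/2⌋·(k−1)!` edges; that is,
`f(k) ≤ (⌊k/2⌋ + 1)·k! − ⌊k/2⌋·(k−1)!`. -/
theorem stmt_16 (k : ℕ) (hk : 3 ≤ k) :
    ∃ (n : ℕ) (E : Finset (Fin k → Fin n)),
      (∀ e ∈ E, Function.Injective e) ∧
      (∀ e ∈ E, ∀ f ∈ E, Set.range e = Set.range f → e = f) ∧
      (∀ σ : Fin n → ℕ, Function.Injective σ →
        ∃ e ∈ E, ∀ i j : Fin k, i < j → σ (e i) < σ (e j)) ∧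
      E.card = (k / 2 + 1) * Nat.factorial k - (k / 2) * Nat.factorial (k - 1) := by
  obtain ⟨c, rfl⟩ : ∃ c, k = c + 1 := ⟨k - 1, by omega⟩
  have hc : 0 < c := by omega
  obtain ⟨n, E, h1, h2, h3, h4⟩ := S16.master c hc
  refine ⟨n, E, h1, h2, h3, ?_⟩
  rw [h4]
  have hsub : ((c+1)/2 + 1) * Nat.factorial (c+1) - ((c+1)/2) * Nat.factorial c
      = (((c+1)/2 + 1) * (c+1) - (c+1)/2) * Nat.factorial c := by
    rw [Nat.factorial_succ, ← Nat.mul_assoc, ← Nat.sub_mul]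
  have hk1 : c + 1 - 1 = c := by omega
  rw [hk1, hsub, Nat.mul_comm]
  congr 1
  rcases Nat.even_or_odd c with ⟨a, rfl⟩ | ⟨a, rfl⟩
  · have h2 : (a + a + 1)/2 = a := by omega
    have h3 : (a + a + 3)/2 = a + 1 := by omega
    rw [h2, h3]
    apply Nat.eq_sub_of_add_eq
    ring
  · have h2 : (2*a + 1 + 1)/2 = a + 1 := by omega
    have h3 : (2*a + 1 + 3)/2 = a + 2 := by omega
    rw [h2, h3]
    apply Nat.eq_sub_of_add_eq
    ring
end

section
/- There exists k₀ such that for all integers k ≥ k₀ there exists an oriented k-graph with Property O having at most k²(ln k)·k! edges; that is, f(k) ≤ (k² ln k)·k! for sufficiently large k. -/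
open Finset

namespace Stmt17

attribute [local instance] Classical.propDecidable

variable {k n : ℕ}

/-- `e` is consistent with the order induced by the permutation `ρ` (ranking map). -/
def cons (e : Fin k → Fin n) (ρ : Equiv.Perm (Fin n)) : Prop :=
  StrictMono fun i => ρ (e i)

lemma image_orderEmbOfFin (A : Finset (Fin n)) (h : A.card = k) :
    Finset.image (fun i => A.orderEmbOfFin h i) Finset.univ = A := by
  apply Finset.coe_injective
  rw [coe_image, coe_univ, Set.image_univ]
  exact A.range_orderEmbOfFin h

/-- The tuple listing `A` sorted according to `ρ`. -/
noncomputable def sortedTuple (ρ : Equiv.Perm (Fin n)) (A : Finset (Fin n)) (h : A.card = k) :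
    Fin k → Fin n :=
  fun i => ρ.symm ((A.image ρ).orderEmbOfFin
    (by rw [Finset.card_image_of_injective _ ρ.injective, h]) i)

lemma sortedTuple_injective (ρ : Equiv.Perm (Fin n)) (A : Finset (Fin n)) (h : A.card = k) :
    Function.Injective (sortedTuple ρ A h) :=
  ρ.symm.injective.comp ((A.image ρ).orderEmbOfFin _).injective

lemma sortedTuple_image (ρ : Equiv.Perm (Fin n)) (A : Finset (Fin n)) (h : A.card = k) :
    Finset.image (sortedTuple ρ A h) Finset.univ = A := by
  unfold sortedTuple
  have h1 : Finset.image (fun i => ρ.symm ((A.image ρ).orderEmbOfFin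
      (by rw [Finset.card_image_of_injective _ ρ.injective, h]) i)) Finset.univ
      = (Finset.image (fun i => (A.image ρ).orderEmbOfFin
      (by rw [Finset.card_image_of_injective _ ρ.injective, h]) i) Finset.univ).image ρ.symm := by
    rw [Finset.image_image]; rfl
  rw [h1, image_orderEmbOfFin, Finset.image_image]
  ext x
  simp [Function.comp]

lemma sortedTuple_cons (ρ : Equiv.Perm (Fin n)) (A : Finset (Fin n)) (h : A.card = k) :
    cons (sortedTuple ρ A h) ρ := by
  intro i j hij
  have := ((A.image ρ).orderEmbOfFin
    (by rw [Finset.card_image_of_injective _ ρ.injective, h])).strictMono hij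
  simpa [sortedTuple] using this

lemma card_filter_injective (k : ℕ) :
    (Finset.univ.filter (fun g : Fin k → Fin k => Function.Injective g)).card
      = k.factorial := by
  rw [← Fintype.card_subtype]
  rw [Fintype.card_congr (Equiv.subtypeInjectiveEquivEmbedding (Fin k) (Fin k))]
  rw [Fintype.card_embedding_eq]
  simp [Nat.descFactorial_self]

lemma exists_good (hk : 0 < k) (hkn : k ≤ n) (F : Finset (Finset (Fin n)))
    (S : Finset (Equiv.Perm (Fin n))) (hF : F.card < Nat.choose n k) :
    ∃ e : Fin k → Fin n, Function.Injective e ∧ Finset.image e Finset.univ ∉ F ∧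
      S.card ≤ k.factorial * (S.filter (fun ρ => cons e ρ)).card := by
  classical
  set G : Finset (Finset (Fin n)) :=
    (Finset.powersetCard k (Finset.univ : Finset (Fin n))) \ F with hGdef
  have hPC : (Finset.powersetCard k (Finset.univ : Finset (Fin n))).card = Nat.choose n k := by
    rw [Finset.card_powersetCard, Finset.card_univ, Fintype.card_fin]
  have hGpos : 0 < G.card := by
    have h1 : (Finset.powersetCard k (Finset.univ : Finset (Fin n))).card - F.card ≤ G.card :=
      Finset.le_card_sdiff F _
    rw [hPC] at h1
    omega
  have hGmem : ∀ A ∈ G, A.card = k ∧ A ∉ F := by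
    intro A hA
    rw [hGdef, Finset.mem_sdiff, Finset.mem_powersetCard_univ] at hA
    exact hA
  set C : Finset (Fin k → Fin n) :=
    Finset.univ.filter
      (fun e => Function.Injective e ∧ Finset.image e Finset.univ ∉ F) with hCdef
  have hCmem : ∀ e, e ∈ C ↔ Function.Injective e ∧ Finset.image e Finset.univ ∉ F := by
    intro e; rw [hCdef, Finset.mem_filter]; simp
  -- step 1 : each order sees at least G.card consistent candidate tuples
  have step1 : ∀ ρ : Equiv.Perm (Fin n), G.card ≤ (C.filter (fun e => cons e ρ)).card := by
    intro ρ
    have hne : Nonempty (Fin n) := ⟨⟨0, lt_of_lt_of_le hk hkn⟩⟩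
    set f : Finset (Fin n) → (Fin k → Fin n) :=
      fun A => if h : A.card = k then sortedTuple ρ A h else fun _ => Classical.arbitrary _
    apply Finset.card_le_card_of_injOn f
    · intro A hA
      obtain ⟨hAk, hAF⟩ := hGmem A hA
      have hf : f A = sortedTuple ρ A hAk := by simp [f, hAk]
      rw [Finset.mem_coe, Finset.mem_filter, hCmem, hf]
      refine ⟨⟨sortedTuple_injective ρ A hAk, ?_⟩, sortedTuple_cons ρ A hAk⟩
      rw [sortedTuple_image]; exact hAF
    · intro A hA B hB hfe
      obtain ⟨hAk, _⟩ := hGmem A hA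
      obtain ⟨hBk, _⟩ := hGmem B hB
      have hfA : f A = sortedTuple ρ A hAk := by simp [f, hAk]
      have hfB : f B = sortedTuple ρ B hBk := by simp [f, hBk]
      calc A = Finset.image (sortedTuple ρ A hAk) Finset.univ := (sortedTuple_image ρ A hAk).symm
        _ = Finset.image (sortedTuple ρ B hBk) Finset.univ := by rw [← hfA, ← hfB, hfe]
        _ = B := sortedTuple_image ρ B hBk
  -- step 2 : double counting
  have step2 : ∑ ρ ∈ S, (C.filter (fun e => cons e ρ)).card
      = ∑ e ∈ C, (S.filter (fun ρ => cons e ρ)).card := by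
    simp only [Finset.card_filter]
    rw [Finset.sum_comm]
  -- step 3 : C.card ≤ k! * G.card
  have step3 : C.card ≤ k.factorial * G.card := by
    have := Finset.card_le_mul_card_image (f := fun e : Fin k → Fin n => Finset.image e Finset.univ)
      C k.factorial ?fib
    case fib =>
      intro A hA
      rw [Finset.mem_image] at hA
      obtain ⟨e0, he0C, rfl⟩ := hA
      obtain ⟨he0inj, _⟩ := (hCmem e0).1 he0C
      have hAk : (Finset.image e0 Finset.univ).card = k := by
        rw [Finset.card_image_of_injective _ he0inj, Finset.card_univ, Fintype.card_fin]
      set A := Finset.image e0 Finset.univ with hAdef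
      set ψ : (Fin k → Fin n) → (Fin k → Fin k) := fun e i =>
        if hm : e i ∈ A then (A.orderIsoOfFin hAk).symm ⟨e i, hm⟩ else ⟨0, hk⟩ with hψ
      have hmem : ∀ e ∈ C.filter (fun e => Finset.image e Finset.univ = A),
          (∀ i, e i ∈ A) ∧ Function.Injective e := by
        intro e he
        rw [Finset.mem_filter] at he
        obtain ⟨heC, heA⟩ := he
        refine ⟨fun i => ?_, ((hCmem e).1 heC).1⟩
        rw [← heA]
        exact Finset.mem_image_of_mem _ (Finset.mem_univ i)
      calc (C.filter (fun e => Finset.image e Finset.univ = A)).card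
          ≤ (Finset.univ.filter (fun g : Fin k → Fin k => Function.Injective g)).card := by
            apply Finset.card_le_card_of_injOn ψ
            · intro e he
              obtain ⟨hin, hinj⟩ := hmem e he
              rw [Finset.mem_coe, Finset.mem_filter]
              refine ⟨Finset.mem_univ _, ?_⟩
              intro i j hij
              rw [hψ] at hij
              simp only [hin i, hin j, dif_pos] at hij
              have := (A.orderIsoOfFin hAk).symm.injective hij
              exact hinj (by simpa using this)
            · intro e he e' he' hee
              obtain ⟨hin, _⟩ := hmem e he
              obtain ⟨hin', _⟩ := hmem e' he'
              funext i
              have := congrFun hee i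
              rw [hψ] at this
              simp only [hin i, hin' i, dif_pos] at this
              have := (A.orderIsoOfFin hAk).symm.injective this
              simpa using this
        _ = k.factorial := card_filter_injective k
    calc C.card ≤ k.factorial * (C.image (fun e => Finset.image e Finset.univ)).card := this
      _ ≤ k.factorial * G.card := by
          apply Nat.mul_le_mul_left
          apply Finset.card_le_card
          intro A hA
          rw [Finset.mem_image] at hA
          obtain ⟨e0, he0C, rfl⟩ := hA
          obtain ⟨he0inj, he0F⟩ := (hCmem e0).1 he0C
          rw [hGdef, Finset.mem_sdiff, Finset.mem_powersetCard_univ]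
          refine ⟨?_, he0F⟩
          rw [Finset.card_image_of_injective _ he0inj, Finset.card_univ, Fintype.card_fin]
  -- C is nonempty
  have hCne : C.Nonempty := by
    obtain ⟨A, hA⟩ := Finset.card_pos.mp hGpos
    obtain ⟨hAk, hAF⟩ := hGmem A hA
    refine ⟨sortedTuple 1 A hAk, ?_⟩
    rw [hCmem]
    exact ⟨sortedTuple_injective 1 A hAk, by rw [sortedTuple_image]; exact hAF⟩
  obtain ⟨e, heC, hemax⟩ := Finset.exists_max_image C
    (fun e => (S.filter (fun ρ => cons e ρ)).card) hCne
  obtain ⟨heinj, heF⟩ := (hCmem e).1 heC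
  refine ⟨e, heinj, heF, ?_⟩
  have hchain : S.card * G.card ≤ (k.factorial * (S.filter (fun ρ => cons e ρ)).card) * G.card := by
    calc S.card * G.card = ∑ _ρ ∈ S, G.card := by rw [Finset.sum_const, smul_eq_mul]
      _ ≤ ∑ ρ ∈ S, (C.filter (fun e => cons e ρ)).card := Finset.sum_le_sum fun ρ _ => step1 ρ
      _ = ∑ e' ∈ C, (S.filter (fun ρ => cons e' ρ)).card := step2
      _ ≤ ∑ _e' ∈ C, (S.filter (fun ρ => cons e ρ)).card :=
            Finset.sum_le_sum fun e' he' => hemax e' he'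
      _ = C.card * (S.filter (fun ρ => cons e ρ)).card := by rw [Finset.sum_const, smul_eq_mul]
      _ ≤ (k.factorial * G.card) * (S.filter (fun ρ => cons e ρ)).card :=
            Nat.mul_le_mul_right _ step3
      _ = (k.factorial * (S.filter (fun ρ => cons e ρ)).card) * G.card := by ring
  exact Nat.le_of_mul_le_mul_right hchain hGpos

lemma greedy (hk : 0 < k) (hkn : k ≤ n) (m : ℕ) :
    ∀ (F : Finset (Finset (Fin n))) (S : Finset (Equiv.Perm (Fin n))),
      F.card + m ≤ Nat.choose n k →
      ∃ E : Finset (Fin k → Fin n), E.card ≤ m ∧ (∀ e ∈ E, Function.Injective e) ∧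
        (∀ e ∈ E, Finset.image e Finset.univ ∉ F) ∧
        (∀ e ∈ E, ∀ f ∈ E, Finset.image e Finset.univ = Finset.image f Finset.univ → e = f) ∧
        k.factorial ^ m * (S.filter (fun ρ => ∀ e ∈ E, ¬ cons e ρ)).card
          ≤ (k.factorial - 1) ^ m * S.card := by
  classical
  induction m with
  | zero =>
    intro F S _
    refine ⟨∅, le_refl _, by simp, by simp, by simp, ?_⟩
    simpa using Finset.card_filter_le S _
  | succ m ih =>
    intro F S hFm
    have hF : F.card < Nat.choose n k := by omega
    obtain ⟨e0, he0inj, he0F, he0cnt⟩ := exists_good hk hkn F S hF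
    set S' := S.filter (fun ρ => ¬ cons e0 ρ) with hS'
    set F' := insert (Finset.image e0 Finset.univ) F with hF'
    have hF'card : F'.card + m ≤ Nat.choose n k := by
      have h1 : F'.card ≤ F.card + 1 := by
        rw [hF']; exact Finset.card_insert_le _ _
      omega
    obtain ⟨E, hcard, hinj, hnotF, hdist, hbound⟩ := ih F' S' hF'card
    refine ⟨insert e0 E, ?_, ?_, ?_, ?_, ?_⟩
    · calc (insert e0 E).card ≤ E.card + 1 := Finset.card_insert_le _ _
        _ ≤ m + 1 := by omega
    · intro e he
      rcases Finset.mem_insert.mp he with rfl | heE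
      · exact he0inj
      · exact hinj e heE
    · intro e he
      rcases Finset.mem_insert.mp he with rfl | heE
      · exact he0F
      · intro hc
        exact hnotF e heE (by rw [hF']; exact Finset.mem_insert_of_mem hc)
    · intro e he f hf hef
      rcases Finset.mem_insert.mp he with rfl | heE <;>
        rcases Finset.mem_insert.mp hf with rfl | hfE
      · rfl
      · exfalso
        exact hnotF f hfE (by rw [hF', ← hef]; exact Finset.mem_insert_self _ _)
      · exfalso
        exact hnotF e heE (by rw [hF', hef]; exact Finset.mem_insert_self _ _)
      · exact hdist e heE f hfE hef
    · -- the counting estimate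
      have hsplit : (S.filter (fun ρ => cons e0 ρ)).card + S'.card = S.card := by
        rw [hS']
        exact Finset.card_filter_add_card_filter_not _
      have hKS' : k.factorial * S'.card ≤ (k.factorial - 1) * S.card := by
        have h1 : k.factorial * S'.card + S.card ≤ k.factorial * S.card := by
          calc k.factorial * S'.card + S.card
              ≤ k.factorial * S'.card + k.factorial * (S.filter (fun ρ => cons e0 ρ)).card := by
                omega
            _ = k.factorial * (S'.card + (S.filter (fun ρ => cons e0 ρ)).card) := by ring
            _ = k.factorial * S.card := by rw [add_comm, hsplit]
        have h2 : (k.factorial - 1) * S.card = k.factorial * S.card - S.card := by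
          rw [Nat.sub_mul, one_mul]
        omega
      have hTrw : S.filter (fun ρ => ∀ e ∈ insert e0 E, ¬ cons e ρ)
          = S'.filter (fun ρ => ∀ e ∈ E, ¬ cons e ρ) := by
        rw [hS', Finset.filter_filter]
        apply Finset.filter_congr
        intro ρ _
        simp [Finset.forall_mem_insert]
      calc k.factorial ^ (m + 1) * (S.filter (fun ρ => ∀ e ∈ insert e0 E, ¬ cons e ρ)).card
          = k.factorial * (k.factorial ^ m * (S'.filter (fun ρ => ∀ e ∈ E, ¬ cons e ρ)).card) := by
            rw [hTrw]; ring
        _ ≤ k.factorial * ((k.factorial - 1) ^ m * S'.card) := Nat.mul_le_mul_left _ hbound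
        _ = (k.factorial - 1) ^ m * (k.factorial * S'.card) := by ring
        _ ≤ (k.factorial - 1) ^ m * ((k.factorial - 1) * S.card) := Nat.mul_le_mul_left _ hKS'
        _ = (k.factorial - 1) ^ (m + 1) * S.card := by ring

lemma log_factorial_le : ∀ N : ℕ, Real.log (Nat.factorial N) ≤ (N : ℝ) * Real.log N := by
  intro N
  induction N with
  | zero => simp [Nat.factorial]
  | succ N ih =>
    have hcast : ((N + 1).factorial : ℝ) = ((N : ℝ) + 1) * (N.factorial : ℝ) := by
      push_cast [Nat.factorial_succ]; ring
    have hlog : Real.log ((N + 1).factorial : ℝ)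
        = Real.log ((N : ℝ) + 1) + Real.log (N.factorial : ℝ) := by
      rw [hcast, Real.log_mul (by positivity) (by positivity)]
    have hmono : Real.log (N : ℝ) ≤ Real.log ((N : ℝ) + 1) := by
      rcases Nat.eq_zero_or_pos N with rfl | hN
      · simp
      · apply Real.log_le_log (by positivity)
        linarith
    calc Real.log ((N + 1).factorial : ℝ)
        = Real.log ((N : ℝ) + 1) + Real.log (N.factorial : ℝ) := hlog
      _ ≤ Real.log ((N : ℝ) + 1) + (N : ℝ) * Real.log N := by linarith
      _ ≤ Real.log ((N : ℝ) + 1) + (N : ℝ) * Real.log ((N : ℝ) + 1) := by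
          have : (0:ℝ) ≤ (N : ℝ) := Nat.cast_nonneg N
          nlinarith
      _ = ((N + 1 : ℕ) : ℝ) * Real.log ((N + 1 : ℕ) : ℝ) := by push_cast; ring_nf

lemma exp_mul_pow_le {k : ℕ} (hk : 1 ≤ k) :
    Real.exp 1 * (k : ℝ) ^ (k + 1) ≤ ((k : ℝ) + 1) ^ (k + 1) := by
  have hk0 : (0:ℝ) < k := by exact_mod_cast hk
  have hk1 : (0:ℝ) < (k : ℝ) + 1 := by linarith
  -- exp (1/(k+1)) * k ≤ k + 1
  have ha : (1:ℝ) - 1 / ((k:ℝ) + 1) ≤ Real.exp (-(1 / ((k:ℝ) + 1))) := by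
    have := Real.add_one_le_exp (-(1 / ((k:ℝ) + 1)))
    linarith
  have hb : Real.exp (1 / ((k:ℝ) + 1)) * (k : ℝ) ≤ (k : ℝ) + 1 := by
    have hmul : Real.exp (1 / ((k:ℝ) + 1)) * ((1:ℝ) - 1 / ((k:ℝ) + 1))
        ≤ Real.exp (1 / ((k:ℝ) + 1)) * Real.exp (-(1 / ((k:ℝ) + 1))) :=
      mul_le_mul_of_nonneg_left ha (Real.exp_pos _).le
    rw [← Real.exp_add] at hmul
    simp only [add_neg_cancel, Real.exp_zero] at hmul
    have hone : (1:ℝ) - 1 / ((k:ℝ) + 1) = (k:ℝ) / ((k:ℝ) + 1) := by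
      field_simp
      ring
    rw [hone] at hmul
    have := mul_le_mul_of_nonneg_right hmul (le_of_lt hk1)
    calc Real.exp (1 / ((k:ℝ) + 1)) * (k : ℝ)
        = Real.exp (1 / ((k:ℝ) + 1)) * ((k:ℝ) / ((k:ℝ) + 1)) * ((k:ℝ) + 1) := by
          field_simp
      _ ≤ 1 * ((k:ℝ) + 1) := this
      _ = (k:ℝ) + 1 := one_mul _
  have hexp1 : Real.exp 1 = Real.exp (1 / ((k:ℝ) + 1)) ^ (k + 1) := by
    rw [← Real.exp_nat_mul]
    congr 1
    push_cast
    field_simp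
  calc Real.exp 1 * (k : ℝ) ^ (k + 1)
      = (Real.exp (1 / ((k:ℝ) + 1)) * (k : ℝ)) ^ (k + 1) := by
        rw [mul_pow, ← hexp1]
    _ ≤ ((k : ℝ) + 1) ^ (k + 1) := by
        apply pow_le_pow_left₀ (by positivity) hb

lemma factorial_exp_bound : ∀ k : ℕ, 1 ≤ k →
    Real.exp k * (Nat.factorial k : ℝ) ≤ Real.exp 1 * (k : ℝ) ^ (k + 1) := by
  intro k hk
  induction k with
  | zero => omega
  | succ k ih =>
    rcases Nat.eq_zero_or_pos k with rfl | hk1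
    · simp
    have hih := ih hk1
    have hk0 : (0:ℝ) < k := by exact_mod_cast hk1
    have hcast : (Nat.factorial (k+1) : ℝ) = ((k:ℝ) + 1) * (Nat.factorial k : ℝ) := by
      push_cast [Nat.factorial_succ]; ring
    have hexp : Real.exp ((k:ℕ)+1 : ℕ) = Real.exp 1 * Real.exp k := by
      push_cast
      rw [← Real.exp_add]
      ring_nf
    calc Real.exp ((k+1 : ℕ) : ℝ) * (Nat.factorial (k+1) : ℝ)
        = ((k:ℝ) + 1) * (Real.exp 1 * (Real.exp k * (Nat.factorial k : ℝ))) := by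
          rw [hcast]
          push_cast
          rw [Real.exp_add]
          ring
      _ ≤ ((k:ℝ) + 1) * (Real.exp 1 * (Real.exp 1 * (k : ℝ) ^ (k + 1))) := by
          apply mul_le_mul_of_nonneg_left _ (by positivity)
          exact mul_le_mul_of_nonneg_left hih (Real.exp_pos 1).le
      _ ≤ ((k:ℝ) + 1) * (Real.exp 1 * ((k:ℝ) + 1) ^ (k + 1)) := by
          apply mul_le_mul_of_nonneg_left _ (by positivity)
          exact mul_le_mul_of_nonneg_left (exp_mul_pow_le hk1) (Real.exp_pos 1).le
      _ = Real.exp 1 * ((k:ℝ) + 1) ^ (k + 2) := by ring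
      _ = Real.exp 1 * (((k:ℕ) + 1 : ℕ) : ℝ) ^ ((k + 1) + 1) := by push_cast; ring

end Stmt17

set_option maxHeartbeats 1600000 in
open Stmt17 in
/-- There exists `k₀` such that for all integers `k ≥ k₀` there
exists an oriented `k`-graph with Property O having at most `k²(ln k)·k!` edges;
that is, `f(k) ≤ (k² ln k)·k!` for sufficiently large `k`. -/
theorem stmt_17 :
    ∃ k₀ : ℕ, ∀ k : ℕ, k₀ ≤ k →
      ∃ (n : ℕ) (E : Finset (Fin k → Fin n)),
        (∀ e ∈ E, Function.Injective e) ∧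
        (∀ e ∈ E, ∀ f ∈ E, Set.range e = Set.range f → e = f) ∧
        (∀ σ : Fin n → ℕ, Function.Injective σ →
          ∃ e ∈ E, ∀ i j : Fin k, i < j → σ (e i) < σ (e j)) ∧
        (E.card : ℝ) ≤ (k : ℝ) ^ 2 * Real.log k * (Nat.factorial k : ℝ) := by
  classical
  have hr : (1:ℝ) < Real.exp 2 / 4 := by
    have h1 : (2.7182818283:ℝ) < Real.exp 1 := Real.exp_one_gt_d9
    have h2 : Real.exp 2 = Real.exp 1 * Real.exp 1 := by
      rw [← Real.exp_add]; norm_num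
    nlinarith
  have htend := tendsto_pow_const_div_const_pow_of_one_lt 6 hr
  have hev : ∀ᶠ j : ℕ in Filter.atTop,
      Real.exp 2 * (j:ℝ)^6 ≤ (Real.exp 2 / 4)^j := by
    have hev0 := htend.eventually (gt_mem_nhds (show (0:ℝ) < (Real.exp 2)⁻¹ by positivity))
    filter_upwards [hev0] with j hj
    have hpow : (0:ℝ) < (Real.exp 2 / 4)^j := by positivity
    rw [div_lt_iff₀ hpow] at hj
    have he2 : (0:ℝ) < Real.exp 2 := Real.exp_pos 2
    calc Real.exp 2 * (j:ℝ)^6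
        ≤ Real.exp 2 * ((Real.exp 2)⁻¹ * (Real.exp 2/4)^j) := by
          apply mul_le_mul_of_nonneg_left (le_of_lt hj) he2.le
      _ = (Real.exp 2/4)^j := by field_simp
  rw [Filter.eventually_atTop] at hev
  obtain ⟨k₁, hk₁⟩ := hev
  refine ⟨max k₁ 10, fun k hk => ?_⟩
  have hk10 : 10 ≤ k := le_trans (le_max_right _ _) hk
  have hE := hk₁ k (le_trans (le_max_left _ _) hk)
  set n := k * k / 2 with hn
  -- basic integer facts
  have hdm := Nat.div_add_mod (k * k) 2
  have hmod : k * k % 2 < 2 := Nat.mod_lt _ (by norm_num)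
  have h2n1 : 2 * n ≤ k * k := by omega
  have h2n2 : k * k ≤ 2 * n + 1 := by omega
  have hk0 : 0 < k := by omega
  have hkn : k ≤ n := by
    rw [hn, Nat.le_div_iff_mul_le (by norm_num)]
    nlinarith
  have hn1 : 1 ≤ n := le_trans hk0 hkn
  -- real versions
  have hkR : (10:ℝ) ≤ (k:ℝ) := by exact_mod_cast hk10
  have hnRup : (n:ℝ) ≤ (k:ℝ)^2 / 2 := by
    have h := (Nat.cast_le (α := ℝ)).mpr h2n1
    push_cast at h; nlinarith
  have hnRlow : ((k:ℝ)^2 - 1) / 2 ≤ (n:ℝ) := by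
    have h := (Nat.cast_le (α := ℝ)).mpr h2n2
    push_cast at h; nlinarith
  have hnR1 : (1:ℝ) ≤ (n:ℝ) := by exact_mod_cast hn1
  set K : ℝ := (Nat.factorial k : ℝ) with hK
  have hK1 : (1:ℝ) ≤ K := by
    rw [hK]; exact_mod_cast Nat.one_le_iff_ne_zero.mpr (Nat.factorial_ne_zero k)
  have hK0 : (0:ℝ) < K := lt_of_lt_of_le one_pos hK1
  set L : ℝ := Real.log (Nat.factorial n : ℝ) with hL
  have hL0 : (0:ℝ) ≤ L := by
    rw [hL]
    apply Real.log_nonneg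
    exact_mod_cast Nat.one_le_iff_ne_zero.mpr (Nat.factorial_ne_zero n)
  set m : ℕ := ⌈K * L⌉₊ + 1 with hm
  have hmlow : K * L < (m:ℝ) := by
    have h := Nat.le_ceil (K * L)
    rw [hm]; push_cast; linarith
  have hmup : (m:ℝ) ≤ K * L + 2 := by
    have h := Nat.ceil_lt_add_one (show (0:ℝ) ≤ K * L by positivity)
    rw [hm]; push_cast; linarith
  -- log bounds
  have hlogk0 : (0:ℝ) ≤ Real.log k := Real.log_nonneg (by linarith)
  have hlogn_le : Real.log (n:ℝ) ≤ 2 * Real.log k - Real.log 2 := by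
    have h1 : Real.log (n:ℝ) ≤ Real.log ((k:ℝ)^2/2) := Real.log_le_log (by linarith) hnRup
    have h2 : Real.log ((k:ℝ)^2/2) = 2 * Real.log k - Real.log 2 := by
      rw [Real.log_div (by positivity) (by norm_num), Real.log_pow]
      push_cast; ring
    linarith
  have hlogn0 : (0:ℝ) ≤ Real.log (n:ℝ) := Real.log_nonneg hnR1
  have hnlogn : (n:ℝ) * Real.log (n:ℝ)
      ≤ (k:ℝ)^2 * Real.log k - (Real.log 2 / 2) * (k:ℝ)^2 := by
    have h := mul_le_mul hnRup hlogn_le hlogn0 (by positivity)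
    nlinarith
  have hLle : L ≤ (n:ℝ) * Real.log (n:ℝ) := by rw [hL]; exact log_factorial_le n
  have hlog2 : (0.6931471803:ℝ) < Real.log 2 := Real.log_two_gt_d9
  -- size bound
  have hmsize : (m:ℝ) ≤ (k:ℝ)^2 * Real.log k * K := by
    have h1 : (m:ℝ) ≤ K * ((k:ℝ)^2 * Real.log k - (Real.log 2/2) * (k:ℝ)^2) + 2 := by
      have : K * L ≤ K * ((k:ℝ)^2 * Real.log k - (Real.log 2/2) * (k:ℝ)^2) :=
        mul_le_mul_of_nonneg_left (by linarith) hK0.le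
      linarith
    have hx : (34:ℝ) ≤ (Real.log 2/2) * (k:ℝ)^2 := by nlinarith [sq_nonneg ((k:ℝ) - 10)]
    have h2 : (2:ℝ) ≤ K * ((Real.log 2/2) * (k:ℝ)^2) := by
      calc (2:ℝ) ≤ 34 := by norm_num
        _ ≤ (Real.log 2/2) * (k:ℝ)^2 := hx
        _ = 1 * ((Real.log 2/2) * (k:ℝ)^2) := (one_mul _).symm
        _ ≤ K * ((Real.log 2/2) * (k:ℝ)^2) :=
            mul_le_mul_of_nonneg_right hK1 (by linarith)
    have h3 : K * ((k:ℝ)^2 * Real.log k - (Real.log 2/2) * (k:ℝ)^2)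
        = K * ((k:ℝ)^2 * Real.log k) - K * ((Real.log 2/2) * (k:ℝ)^2) := by ring
    have h4 : K * ((k:ℝ)^2 * Real.log k) = (k:ℝ)^2 * Real.log k * K := by ring
    linarith
  -- avoidance bound (C3)
  have hsub : ((Nat.factorial k - 1 : ℕ) : ℝ) = K - 1 := by
    have h1 : 1 ≤ Nat.factorial k := Nat.one_le_iff_ne_zero.mpr (Nat.factorial_ne_zero k)
    rw [Nat.cast_sub h1, Nat.cast_one, hK]
  have hC3 : ((Nat.factorial k - 1 : ℕ) : ℝ)^m * (Nat.factorial n : ℝ) < K^m := by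
    have h1 : K - 1 ≤ Real.exp (-(1/K)) * K := by
      have h := Real.add_one_le_exp (-(1/K))
      have h' : (1 - 1/K) * K ≤ Real.exp (-(1/K)) * K :=
        mul_le_mul_of_nonneg_right (by linarith) hK0.le
      calc K - 1 = (1 - 1/K) * K := by field_simp
        _ ≤ Real.exp (-(1/K)) * K := h'
    have h2 : (K-1)^m ≤ (Real.exp (-(1/K)) * K)^m :=
      pow_le_pow_left₀ (by linarith) h1 m
    have h3 : (Real.exp (-(1/K)) * K)^m = Real.exp ((m:ℝ) * -(1/K)) * K^m := by
      rw [mul_pow, ← Real.exp_nat_mul]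
    have hfn : (Nat.factorial n : ℝ) = Real.exp L := by
      rw [hL, Real.exp_log (by positivity)]
    have h4 : Real.exp ((m:ℝ) * -(1/K)) * (Nat.factorial n : ℝ) < 1 := by
      rw [hfn, ← Real.exp_add, Real.exp_lt_one_iff]
      have h5 : L < (m:ℝ)/K := by
        rw [lt_div_iff₀ hK0]
        calc L * K = K * L := by ring
          _ < (m:ℝ) := hmlow
      have h6 : (m:ℝ) * -(1/K) = -((m:ℝ)/K) := by ring
      rw [h6]; linarith
    calc ((Nat.factorial k - 1 : ℕ) : ℝ)^m * (Nat.factorial n : ℝ)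
        = (K-1)^m * (Nat.factorial n : ℝ) := by rw [hsub]
      _ ≤ (Real.exp (-(1/K)) * K)^m * (Nat.factorial n : ℝ) :=
          mul_le_mul_of_nonneg_right h2 (by positivity)
      _ = (Real.exp ((m:ℝ) * -(1/K)) * (Nat.factorial n : ℝ)) * K^m := by rw [h3]; ring
      _ < 1 * K^m := by
          apply mul_lt_mul_of_pos_right h4 (by positivity)
      _ = K^m := one_mul _
  -- m ≤ choose n k  (C1)
  have hqle : k ≤ n + 1 := by omega
  set q : ℕ := n + 1 - k with hqdef
  have hqR : (q:ℝ) = (n:ℝ) + 1 - (k:ℝ) := by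
    rw [hqdef, Nat.cast_sub hqle]; push_cast; ring
  have hq4 : (k:ℝ)^2/4 ≤ (q:ℝ) := by rw [hqR]; nlinarith
  have hfac : Real.exp k * K ≤ Real.exp 1 * (k:ℝ)^(k+1) := by
    rw [hK]; exact factorial_exp_bound k (by omega)
  have hfac2 : K^2 * (Real.exp 2)^k ≤ Real.exp 2 * (k:ℝ)^(2*k+2) := by
    have h := mul_le_mul hfac hfac (by positivity) (by positivity)
    have e0 : Real.exp (k:ℝ) * Real.exp (k:ℝ) = (Real.exp 2)^k := by
      rw [← Real.exp_add, ← Real.exp_nat_mul]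
      congr 1; push_cast; ring
    have e1 : Real.exp (k:ℝ) * K * (Real.exp (k:ℝ) * K) = K^2 * (Real.exp 2)^k := by
      rw [show Real.exp (k:ℝ) * K * (Real.exp (k:ℝ) * K)
          = (Real.exp (k:ℝ) * Real.exp (k:ℝ)) * K^2 by ring, e0]; ring
    have e2 : Real.exp 1 * (k:ℝ)^(k+1) * (Real.exp 1 * (k:ℝ)^(k+1))
        = Real.exp 2 * (k:ℝ)^(2*k+2) := by
      rw [show Real.exp 1 * (k:ℝ)^(k+1) * (Real.exp 1 * (k:ℝ)^(k+1))
          = (Real.exp 1 * Real.exp 1) * ((k:ℝ)^(k+1) * (k:ℝ)^(k+1)) by ring,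
        ← Real.exp_add, ← pow_add]
      norm_num
      congr 1
      omega
    rw [e1, e2] at h
    exact h
  have hLk4 : L + 2 ≤ (k:ℝ)^4 := by
    have hlogk : Real.log k ≤ (k:ℝ) - 1 := Real.log_le_sub_one_of_pos (by linarith)
    have h1 : L ≤ (k:ℝ)^2 * Real.log k := by nlinarith
    nlinarith
  have hKm : K * (m:ℝ) ≤ K^2 * (k:ℝ)^4 := by
    calc K * (m:ℝ) ≤ K * (K*L + 2) := mul_le_mul_of_nonneg_left hmup hK0.le
      _ = K*K*L + 2*K := by ring
      _ ≤ K*K*L + 2*(K*K) := by nlinarith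
      _ = K^2 * (L + 2) := by ring
      _ ≤ K^2 * (k:ℝ)^4 := mul_le_mul_of_nonneg_left hLk4 (by positivity)
  have hcmp : K^2 * (k:ℝ)^4 ≤ (q:ℝ)^k := by
    have hE2pos : (0:ℝ) < (Real.exp 2)^k := by positivity
    rw [← mul_le_mul_iff_of_pos_right hE2pos]
    have step1 : K^2 * (k:ℝ)^4 * (Real.exp 2)^k
        ≤ (Real.exp 2 * (k:ℝ)^(2*k+2)) * (k:ℝ)^4 := by
      calc K^2 * (k:ℝ)^4 * (Real.exp 2)^k = (K^2 * (Real.exp 2)^k) * (k:ℝ)^4 := by ring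
        _ ≤ (Real.exp 2 * (k:ℝ)^(2*k+2)) * (k:ℝ)^4 :=
            mul_le_mul_of_nonneg_right hfac2 (by positivity)
    have step2 : (Real.exp 2 * (k:ℝ)^(2*k+2)) * (k:ℝ)^4
        = (Real.exp 2 * (k:ℝ)^6) * (k:ℝ)^(2*k) := by
      rw [show (Real.exp 2 * (k:ℝ)^(2*k+2)) * (k:ℝ)^4
          = Real.exp 2 * ((k:ℝ)^(2*k+2) * (k:ℝ)^4) by ring, ← pow_add]
      rw [show (Real.exp 2 * (k:ℝ)^6) * (k:ℝ)^(2*k)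
          = Real.exp 2 * ((k:ℝ)^6 * (k:ℝ)^(2*k)) by ring, ← pow_add]
      congr 1
      congr 1
      omega
    have step3 : (Real.exp 2 * (k:ℝ)^6) * (k:ℝ)^(2*k)
        ≤ (Real.exp 2/4)^k * (k:ℝ)^(2*k) :=
      mul_le_mul_of_nonneg_right hE (by positivity)
    have step4 : (Real.exp 2/4)^k * (k:ℝ)^(2*k) = ((k:ℝ)^2/4)^k * (Real.exp 2)^k := by
      rw [div_pow, div_pow, pow_mul]
      ring
    have step5 : ((k:ℝ)^2/4)^k * (Real.exp 2)^k ≤ (q:ℝ)^k * (Real.exp 2)^k :=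
      mul_le_mul_of_nonneg_right (pow_le_pow_left₀ (by positivity) hq4 k) (by positivity)
    calc K^2 * (k:ℝ)^4 * (Real.exp 2)^k
        ≤ (Real.exp 2 * (k:ℝ)^(2*k+2)) * (k:ℝ)^4 := step1
      _ = (Real.exp 2 * (k:ℝ)^6) * (k:ℝ)^(2*k) := step2
      _ ≤ (Real.exp 2/4)^k * (k:ℝ)^(2*k) := step3
      _ = ((k:ℝ)^2/4)^k * (Real.exp 2)^k := step4
      _ ≤ (q:ℝ)^k * (Real.exp 2)^k := step5
  have hmN : m ≤ Nat.choose n k := by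
    have hnat : q ^ k ≤ Nat.factorial k * Nat.choose n k := by
      calc q ^ k = (n + 1 - k) ^ k := by rw [hqdef]
        _ ≤ n.descFactorial k := Nat.pow_sub_le_descFactorial n k
        _ = Nat.factorial k * Nat.choose n k := Nat.descFactorial_eq_factorial_mul_choose n k
    have hcast : ((q ^ k : ℕ) : ℝ) ≤ ((Nat.factorial k * Nat.choose n k : ℕ) : ℝ) :=
      Nat.cast_le.mpr hnat
    push_cast at hcast
    have hreal : K * (m:ℝ) ≤ K * (Nat.choose n k : ℝ) := by
      calc K * (m:ℝ) ≤ (q:ℝ)^k := le_trans hKm hcmp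
        _ ≤ (Nat.factorial k : ℝ) * (Nat.choose n k : ℝ) := hcast
        _ = K * (Nat.choose n k : ℝ) := by rw [hK]
    have := le_of_mul_le_mul_left hreal hK0
    exact_mod_cast this
  -- apply the greedy construction
  obtain ⟨E, hEcard, hEinj, _, hEdist, hEcover⟩ :=
    greedy hk0 hkn m (∅ : Finset (Finset (Fin n)))
      (Finset.univ : Finset (Equiv.Perm (Fin n))) (by simpa using hmN)
  refine ⟨n, E, hEinj, ?_, ?_, ?_⟩
  · intro e he f hf hran
    apply hEdist e he f hf
    apply Finset.coe_injective
    rw [Finset.coe_image, Finset.coe_image, Finset.coe_univ, Set.image_univ, Set.image_univ, hran]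
  · -- Property O
    have hcards : (Finset.univ : Finset (Equiv.Perm (Fin n))).card = Nat.factorial n := by
      rw [Finset.card_univ, Fintype.card_perm, Fintype.card_fin]
    have hucard :
        ((Finset.univ : Finset (Equiv.Perm (Fin n))).filter
          (fun ρ => ∀ e ∈ E, ¬ cons e ρ)).card = 0 := by
      by_contra hne
      have h1 : 1 ≤ ((Finset.univ : Finset (Equiv.Perm (Fin n))).filter
          (fun ρ => ∀ e ∈ E, ¬ cons e ρ)).card := Nat.one_le_iff_ne_zero.mpr hne
      have h2 : Nat.factorial k ^ m ≤ (Nat.factorial k - 1)^m * Nat.factorial n := by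
        calc Nat.factorial k ^ m
            = Nat.factorial k ^ m * 1 := (mul_one _).symm
          _ ≤ Nat.factorial k ^ m * ((Finset.univ : Finset (Equiv.Perm (Fin n))).filter
              (fun ρ => ∀ e ∈ E, ¬ cons e ρ)).card := Nat.mul_le_mul_left _ h1
          _ ≤ (Nat.factorial k - 1)^m
              * (Finset.univ : Finset (Equiv.Perm (Fin n))).card := hEcover
          _ = (Nat.factorial k - 1)^m * Nat.factorial n := by rw [hcards]
      have h3 : K^m ≤ ((Nat.factorial k - 1 : ℕ):ℝ)^m * (Nat.factorial n : ℝ) := by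
        have := Nat.cast_le (α := ℝ) |>.mpr h2
        push_cast at this
        rw [hK]
        convert this using 2 <;> push_cast <;> ring
      linarith
    have hempty : ((Finset.univ : Finset (Equiv.Perm (Fin n))).filter
        (fun ρ => ∀ e ∈ E, ¬ cons e ρ)) = ∅ := Finset.card_eq_zero.mp hucard
    intro σ hσ
    set s : Finset ℕ := Finset.image σ Finset.univ with hs
    have hscard : s.card = n := by
      rw [hs, Finset.card_image_of_injective _ hσ, Finset.card_univ, Fintype.card_fin]
    set iso := s.orderIsoOfFin hscard with hiso
    have hmemσ : ∀ v, σ v ∈ s := fun v => Finset.mem_image_of_mem _ (Finset.mem_univ v)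
    set ρ0 : Fin n → Fin n := fun v => iso.symm ⟨σ v, hmemσ v⟩ with hρ0
    have hρ0inj : Function.Injective ρ0 := by
      intro a b hab
      have h := iso.symm.injective hab
      rw [Subtype.mk_eq_mk] at h
      exact hσ h
    have hρ0bij := Finite.injective_iff_bijective.mp hρ0inj
    set ρ : Equiv.Perm (Fin n) := Equiv.ofBijective ρ0 hρ0bij with hρ
    have hρ0lt : ∀ a b, ρ0 a < ρ0 b ↔ σ a < σ b := by
      intro a b
      rw [hρ0]
      simp only []
      rw [OrderIso.lt_iff_lt]
      exact Subtype.mk_lt_mk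
    have hρnot : ρ ∉ ((Finset.univ : Finset (Equiv.Perm (Fin n))).filter
        (fun ρ => ∀ e ∈ E, ¬ cons e ρ)) := by
      rw [hempty]; exact Finset.notMem_empty _
    have hnotall : ¬ (∀ e ∈ E, ¬ cons e ρ) := by
      intro hcon
      exact hρnot (Finset.mem_filter.mpr ⟨Finset.mem_univ _, hcon⟩)
    push_neg at hnotall
    obtain ⟨e, heE, hecons⟩ := hnotall
    refine ⟨e, heE, fun i j hij => ?_⟩
    have h := hecons hij
    exact (hρ0lt (e i) (e j)).mp h
  · calc (E.card : ℝ) ≤ (m:ℝ) := by exact_mod_cast hEcard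
      _ ≤ (k:ℝ)^2 * Real.log k * K := hmsize
end
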